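/- arXiv:2603.05100 — 7 statements merged into one kernel-verified Lean document; each statement's English description precedes it below -/
import Mathlib

section
/- Let G₁ and G₂ be vertex-disjoint graphs and let G = G₁ * G₂ be their join. Then for every u ∈ V(G₁) and v ∈ V(G₂), the maximum number of pairwise internally vertex-disjoint u–v paths in G equals min{d_G(u), d_G(v)}. -/
open SimpleGraph
open scoped ENNReal NNReal

/-- The number of connected components of a graph. -/
noncomputable def componentCount {V : Type*} (G : SimpleGraph V) : ℕ :=
  Nat.card G.ConnectedComponent

/-- `S` is a separator of `G` if `G - S` has at least two connected components. -/
def SimpleGraph.IsSeparator {V : Type*} (G : SimpleGraph V) (S : Finset V) : Prop :=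
  2 ≤ componentCount (G.induce ((↑S : Set V)ᶜ))

/-- The toughness of a graph, as an extended nonnegative real:
the infimum over all separators `S` of `|S| / c(G - S)`; `∞` if there is no separator. -/
noncomputable def SimpleGraph.toughness {V : Type*} (G : SimpleGraph V) : ℝ≥0∞ :=
  ⨅ (S : Finset V) (_ : G.IsSeparator S),
    (S.card : ℝ≥0∞) / (componentCount (G.induce ((↑S : Set V)ᶜ)) : ℝ≥0∞)

/-- A graph is minimally tough if deleting any edge strictly decreases the toughness. -/
def SimpleGraph.MinimallyTough {V : Type*} (G : SimpleGraph V) : Prop :=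
  ∀ e ∈ G.edgeSet, (G.deleteEdges {e}).toughness < G.toughness

/-- The degree of a vertex (as the cardinality of its neighbourhood). -/
noncomputable def SimpleGraph.deg {V : Type*} (G : SimpleGraph V) (v : V) : ℕ :=
  (G.neighborSet v).ncard

/-- A graph is `d`-regular if every vertex has degree `d`. -/
def SimpleGraph.RegularOfDegree {V : Type*} (G : SimpleGraph V) (d : ℕ) : Prop :=
  ∀ v, G.deg v = d

/-- Two `u`-`v` walks are internally disjoint if `u` and `v` are their only common vertices. -/
def SimpleGraph.InternallyDisjoint {V : Type*} {G : SimpleGraph V} {u v : V}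
    (p q : G.Walk u v) : Prop :=
  ∀ w, w ∈ p.support → w ∈ q.support → w = u ∨ w = v

/-- The local connectivity `κ_G(u,v)`: the maximum number of pairwise internally
vertex-disjoint `u`-`v` paths in `G`. -/
noncomputable def SimpleGraph.localConnectivity {V : Type*} (G : SimpleGraph V) (u v : V) : ℕ :=
  sSup {n | ∃ P : Set (G.Path u v), P.ncard = n ∧
    P.Pairwise fun p q => SimpleGraph.InternallyDisjoint (p : G.Walk u v) (q : G.Walk u v)}

/-- A graph is `k`-connected if it has more than `k` vertices and removing fewer than `k`
vertices leaves it connected. -/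
def SimpleGraph.IsKConnected {V : Type*} (G : SimpleGraph V) (k : ℕ) : Prop :=
  k < Nat.card V ∧ ∀ S : Finset V, S.card < k → (G.induce ((↑S : Set V)ᶜ)).Connected

/-- The connectivity `κ(G)` of a graph: the largest `k` such that `G` is `k`-connected. -/
noncomputable def SimpleGraph.connectivity {V : Type*} (G : SimpleGraph V) : ℕ :=
  sSup {k | G.IsKConnected k}

/-- The maximum size of a matching in `G`. -/
noncomputable def SimpleGraph.maxMatching {V : Type*} (G : SimpleGraph V) : ℕ :=
  sSup {n | ∃ M : G.Subgraph, M.IsMatching ∧ M.edgeSet.ncard = n}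

/-- A walk has a chord if some edge of `G` joins two of its vertices but is not an
edge of the walk. -/
def SimpleGraph.Walk.HasChord {V : Type*} {G : SimpleGraph V} {v : V} (c : G.Walk v v) : Prop :=
  ∃ x y, x ∈ c.support ∧ y ∈ c.support ∧ G.Adj x y ∧ s(x, y) ∉ c.edges

/-- A graph is chordal if every cycle of length at least 4 has a chord. -/
def SimpleGraph.IsChordal {V : Type*} (G : SimpleGraph V) : Prop :=
  ∀ (v : V) (c : G.Walk v v), c.IsCycle → 4 ≤ c.length → c.HasChord

/-- A vertex is universal if it is adjacent to all other vertices. -/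
def SimpleGraph.IsUniversal' {V : Type*} (G : SimpleGraph V) (v : V) : Prop :=
  ∀ w, w ≠ v → G.Adj v w

namespace SimpleGraph

variable {V : Type*} {G : SimpleGraph V}

lemma walk_cons_decomp {u v : V} (hne : u ≠ v) (p : G.Walk u v) :
    ∃ (x : V) (h : G.Adj u x) (q : G.Walk x v), p = Walk.cons h q := by
  cases p with
  | nil => exact absurd rfl hne
  | cons h q => exact ⟨_, h, q, rfl⟩

lemma aux_ub [Fintype V] {u v : V} (hne : u ≠ v) (P : Set (G.Path u v))
    (hP : P.Pairwise fun p q => InternallyDisjoint (p : G.Walk u v) (q : G.Walk u v)) :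
    P.ncard ≤ G.deg u := by
  classical
  have hinj : Set.InjOn (fun p : G.Path u v => (p : G.Walk u v).getVert 1) P := by
    intro p hp q hq hfeq
    by_contra hpq
    obtain ⟨x, hx, p', hp'⟩ := walk_cons_decomp hne (p : G.Walk u v)
    obtain ⟨y, hy, q', hq'⟩ := walk_cons_decomp hne (q : G.Walk u v)
    have hxy : x = y := by
      simpa [hp', hq', Walk.getVert_cons_succ, Walk.getVert_zero] using hfeq
    subst hxy
    have hxs : x ∈ (p : G.Walk u v).support := by
      rw [hp']; simp [Walk.support_cons]
    have hxs' : x ∈ (q : G.Walk u v).support := by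
      rw [hq']; simp [Walk.support_cons]
    have := hP hp hq hpq x hxs hxs'
    rcases this with h | h
    · exact hx.ne' h
    · subst h
      have hpp : p'.IsPath := by
        have := p.2; rw [hp'] at this; exact this.of_cons
      have hqp : q'.IsPath := by
        have := q.2; rw [hq'] at this; exact this.of_cons
      rw [Walk.isPath_iff_eq_nil] at hpp hqp
      apply hpq
      apply Subtype.ext
      rw [hp', hq', hpp, hqp]
  have hsub : (fun p : G.Path u v => (p : G.Walk u v).getVert 1) '' P ⊆ G.neighborSet u := by
    rintro _ ⟨p, hp, rfl⟩
    have hlen : 0 < (p : G.Walk u v).length := by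
      rcases Nat.eq_zero_or_pos (p : G.Walk u v).length with h | h
      · exact absurd (Walk.eq_of_length_eq_zero h) hne
      · exact h
    have := (p : G.Walk u v).adj_getVert_succ hlen
    rwa [Walk.getVert_zero] at this
  calc P.ncard = ((fun p : G.Path u v => (p : G.Walk u v).getVert 1) '' P).ncard :=
        (Set.ncard_image_of_injOn hinj).symm
    _ ≤ (G.neighborSet u).ncard := Set.ncard_le_ncard hsub (Set.toFinite _)
    _ = G.deg u := rfl

end SimpleGraph

namespace SimpleGraph
variable {V : Type*} {G : SimpleGraph V}

lemma aux_rev {u v : V} (P : Set (G.Path u v))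
    (hP : P.Pairwise fun p q => InternallyDisjoint (p : G.Walk u v) (q : G.Walk u v)) :
    ∃ Q : Set (G.Path v u), Q.ncard = P.ncard ∧
      Q.Pairwise fun p q => InternallyDisjoint (p : G.Walk v u) (q : G.Walk v u) := by
  refine ⟨Path.reverse '' P, ?_, ?_⟩
  · apply Set.ncard_image_of_injOn
    intro p _ q _ h
    have hrr : ∀ r : G.Path u v, r.reverse.reverse = r := fun r =>
      Subtype.ext (Walk.reverse_reverse _)
    have h2 := congrArg Path.reverse h
    rwa [hrr, hrr] at h2
  · rintro _ ⟨p, hp, rfl⟩ _ ⟨q, hq, rfl⟩ hne w hwp hwq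
    have hpq : p ≠ q := by rintro rfl; exact hne rfl
    have hwp' : w ∈ (p : G.Walk u v).support := by
      simpa [Path.reverse, Walk.support_reverse] using hwp
    have hwq' : w ∈ (q : G.Walk u v).support := by
      simpa [Path.reverse, Walk.support_reverse] using hwq
    exact (hP hp hq hpq w hwp' hwq').symm
end SimpleGraph

namespace SimpleGraph
variable {V : Type*} {G : SimpleGraph V}

def triPath {u a v : V} (h1 : G.Adj u a) (h2 : G.Adj a v) (huv : u ≠ v) : G.Path u v :=
  ⟨Walk.cons h1 (Walk.cons h2 Walk.nil), by
    simp [Walk.cons_isPath_iff, h1.ne, h2.ne, huv]⟩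

def quadPath {u b a v : V} (h1 : G.Adj u b) (h2 : G.Adj b a) (h3 : G.Adj a v)
    (hua : u ≠ a) (hbv : b ≠ v) (huv : u ≠ v) : G.Path u v :=
  ⟨Walk.cons h1 (Walk.cons h2 (Walk.cons h3 Walk.nil)), by
    simp [Walk.cons_isPath_iff, h1.ne, h2.ne, h3.ne, hua, hbv, huv]⟩

lemma id_of_internals {u v : V} (p q : G.Walk u v) (sp sq : List V)
    (hp : p.support = u :: sp ++ [v]) (hq : q.support = u :: sq ++ [v])
    (h : ∀ w ∈ sp, w ∉ sq) : SimpleGraph.InternallyDisjoint p q := by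
  intro w hwp hwq
  rw [hp] at hwp; rw [hq] at hwq
  have hwp' : w = u ∨ w ∈ sp ∨ w = v := by simpa using hwp
  have hwq' : w = u ∨ w ∈ sq ∨ w = v := by simpa using hwq
  rcases hwp' with rfl | hwp | rfl
  · exact Or.inl rfl
  · rcases hwq' with rfl | hwq | rfl
    · exact Or.inl rfl
    · exact absurd hwq (h _ hwp)
    · exact Or.inr rfl
  · exact Or.inr rfl

lemma aux_lb [Fintype V] [DecidableEq V] (G : SimpleGraph V) (A B : Finset V)
    (hdisj : Disjoint A B) (hcover : A ∪ B = Finset.univ)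
    (hjoin : ∀ a ∈ A, ∀ b ∈ B, G.Adj a b)
    (u v : V) (hu : u ∈ A) (hv : v ∈ B) :
    ∃ P : Set (G.Path u v), P.ncard = min (G.deg u) (G.deg v) ∧
      P.Pairwise fun p q => InternallyDisjoint (p : G.Walk u v) (q : G.Walk u v) := by
  classical
  have huv : G.Adj u v := hjoin u hu v hv
  have hne : u ≠ v := huv.ne
  have hAB : ∀ x, x ∈ A → x ∈ B → False := fun x hx hy => Finset.disjoint_left.mp hdisj hx hy
  have hmem : ∀ x : V, x ∈ A ∨ x ∈ B := by
    intro x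
    have : x ∈ A ∪ B := by rw [hcover]; exact Finset.mem_univ x
    exact Finset.mem_union.mp this
  set NA := A.filter (fun a => G.Adj u a) with hNAdef
  set NB := B.filter (fun b => G.Adj v b) with hNBdef
  set A' := A \ insert u NA with hA'def
  set B' := B \ insert v NB with hB'def
  have hNAsub : NA ⊆ A := Finset.filter_subset _ _
  have hNBsub : NB ⊆ B := Finset.filter_subset _ _
  have hNAfact : ∀ a ∈ NA, a ∈ A ∧ G.Adj u a := fun a ha => Finset.mem_filter.mp ha
  have hNBfact : ∀ b ∈ NB, b ∈ B ∧ G.Adj v b := fun b hb => Finset.mem_filter.mp hb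
  have hA'fact : ∀ a ∈ A', a ∈ A ∧ a ≠ u ∧ a ∉ NA := by
    intro a ha
    rw [hA'def, Finset.mem_sdiff, Finset.mem_insert] at ha
    exact ⟨ha.1, fun h => ha.2 (Or.inl h), fun h => ha.2 (Or.inr h)⟩
  have hB'fact : ∀ b ∈ B', b ∈ B ∧ b ≠ v ∧ b ∉ NB := by
    intro b hb
    rw [hB'def, Finset.mem_sdiff, Finset.mem_insert] at hb
    exact ⟨hb.1, fun h => hb.2 (Or.inl h), fun h => hb.2 (Or.inr h)⟩
  -- degrees
  have hNu : G.neighborSet u = ↑(NA ∪ B) := by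
    ext x
    simp only [mem_neighborSet, Finset.coe_union, Set.mem_union, Finset.mem_coe, hNAdef,
      Finset.mem_filter]
    constructor
    · intro hadj
      rcases hmem x with hx | hx
      · exact Or.inl ⟨hx, hadj⟩
      · exact Or.inr hx
    · rintro (⟨_, hadj⟩ | hx)
      · exact hadj
      · exact hjoin u hu x hx
  have hNv : G.neighborSet v = ↑(NB ∪ A) := by
    ext x
    simp only [mem_neighborSet, Finset.coe_union, Set.mem_union, Finset.mem_coe, hNBdef,
      Finset.mem_filter]
    constructor
    · intro hadj
      rcases hmem x with hx | hx
      · exact Or.inr hx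
      · exact Or.inl ⟨hx, hadj⟩
    · rintro (⟨_, hadj⟩ | hx)
      · exact hadj
      · exact (hjoin x hx v hv).symm
  have hdegu : G.deg u = NA.card + B.card := by
    rw [SimpleGraph.deg, hNu, Set.ncard_coe_finset, Finset.card_union_of_disjoint]
    exact Finset.disjoint_left.mpr fun x hx hxB => hAB x (hNAfact x hx).1 hxB
  have hdegv : G.deg v = NB.card + A.card := by
    rw [SimpleGraph.deg, hNv, Set.ncard_coe_finset, Finset.card_union_of_disjoint]
    exact Finset.disjoint_left.mpr fun x hx hxA => hAB x hxA (hNBfact x hx).1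
  have huNA : u ∉ NA := fun h => G.irrefl (hNAfact u h).2
  have hvNB : v ∉ NB := fun h => G.irrefl (hNBfact v h).2
  have hBcard : B.card = B'.card + NB.card + 1 := by
    have hsub : insert v NB ⊆ B := Finset.insert_subset hv hNBsub
    have h1 : (insert v NB).card = NB.card + 1 := Finset.card_insert_of_notMem hvNB
    have h2 : B'.card = B.card - (insert v NB).card := by
      rw [hB'def]; exact Finset.card_sdiff_of_subset hsub
    have h3 := Finset.card_le_card hsub
    omega
  have hAcard : A.card = A'.card + NA.card + 1 := by
    have hsub : insert u NA ⊆ A := Finset.insert_subset hu hNAsub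
    have h1 : (insert u NA).card = NA.card + 1 := Finset.card_insert_of_notMem huNA
    have h2 : A'.card = A.card - (insert u NA).card := by
      rw [hA'def]; exact Finset.card_sdiff_of_subset hsub
    have h3 := Finset.card_le_card hsub
    omega
  set k := min B'.card A'.card with hkdef
  have hmin : min (G.deg u) (G.deg v) = 1 + NA.card + NB.card + k := by omega
  obtain ⟨B'', hB''sub, hB''card⟩ := Finset.exists_subset_card_eq (s := B') (n := k) (min_le_left _ _)
  obtain ⟨A'', hA''sub, hA''card⟩ := Finset.exists_subset_card_eq (s := A') (n := k) (min_le_right _ _)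
  have hcards : B''.card = A''.card := by rw [hB''card, hA''card]
  set e := Finset.equivOfCardEq hcards with hedef
  have hB''B : ∀ b ∈ B'', b ∈ B ∧ b ≠ v ∧ b ∉ NB := fun b hb => hB'fact b (hB''sub hb)
  have hA''A : ∀ a ∈ A'', a ∈ A ∧ a ≠ u ∧ a ∉ NA := fun a ha => hA'fact a (hA''sub ha)
  -- path families
  set p0 : G.Path u v := Path.singleton huv with hp0def
  set fA : {a // a ∈ NA} → G.Path u v := fun a =>
    triPath (hNAfact a.1 a.2).2 (hjoin a.1 (hNAfact a.1 a.2).1 v hv) hne with hfAdef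
  set fB : {b // b ∈ NB} → G.Path u v := fun b =>
    triPath (hjoin u hu b.1 (hNBfact b.1 b.2).1) ((hNBfact b.1 b.2).2).symm hne with hfBdef
  set fC : {b // b ∈ B''} → G.Path u v := fun b =>
    quadPath (hjoin u hu b.1 (hB''B b.1 b.2).1)
      ((hjoin (e b).1 (hA''A (e b).1 (e b).2).1 b.1 (hB''B b.1 b.2).1).symm)
      (hjoin (e b).1 (hA''A (e b).1 (e b).2).1 v hv)
      (Ne.symm (hA''A (e b).1 (e b).2).2.1) (hB''B b.1 b.2).2.1 hne with hfCdef
  -- supports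
  have hsup0 : (p0 : G.Walk u v).support = [u] ++ [] ++ [v] := rfl
  have hsupA : ∀ a, ((fA a : G.Path u v) : G.Walk u v).support = [u] ++ [a.1] ++ [v] := fun a => rfl
  have hsupB : ∀ b, ((fB b : G.Path u v) : G.Walk u v).support = [u] ++ [b.1] ++ [v] := fun b => rfl
  have hsupC : ∀ b, ((fC b : G.Path u v) : G.Walk u v).support
      = [u] ++ [b.1, (e b).1] ++ [v] := fun b => rfl
  -- injectivity
  have hinjA : Function.Injective fA := by
    intro a1 a2 h
    have h2 := congrArg (fun p : G.Path u v => (p : G.Walk u v).support) h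
    simp only [hsupA] at h2
    exact Subtype.ext (by simpa using h2)
  have hinjB : Function.Injective fB := by
    intro b1 b2 h
    have h2 := congrArg (fun p : G.Path u v => (p : G.Walk u v).support) h
    simp only [hsupB] at h2
    exact Subtype.ext (by simpa using h2)
  have hinjC : Function.Injective fC := by
    intro b1 b2 h
    have h2 := congrArg (fun p : G.Path u v => (p : G.Walk u v).support) h
    simp only [hsupC] at h2
    obtain ⟨h3, -⟩ : (b1 : V) = (b2 : V) ∧ ((e b1 : V) = (e b2 : V)) := by simpa using h2
    exact Subtype.ext h3
  -- the finset of paths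
  set F : Finset (G.Path u v) :=
    insert p0 (NA.attach.image fA ∪ NB.attach.image fB ∪ B''.attach.image fC) with hFdef
  have hABne : ∀ x y : V, x ∈ A → y ∈ B → x ≠ y := by
    rintro x y hx hy rfl; exact hAB x hx hy
  -- p0 not in the images
  have h0A : ∀ a, p0 ≠ fA a := by
    intro a h
    have h2 := congrArg (fun p : G.Path u v => (p : G.Walk u v).support) h
    simp only [hsup0, hsupA] at h2
    simp at h2
  have h0B : ∀ b, p0 ≠ fB b := by
    intro b h
    have h2 := congrArg (fun p : G.Path u v => (p : G.Walk u v).support) h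
    simp only [hsup0, hsupB] at h2
    simp at h2
  have h0C : ∀ b, p0 ≠ fC b := by
    intro b h
    have h2 := congrArg (fun p : G.Path u v => (p : G.Walk u v).support) h
    simp only [hsup0, hsupC] at h2
    simp at h2
  have hAneB : ∀ a b, fA a ≠ fB b := by
    intro a b h
    have h2 := congrArg (fun p : G.Path u v => (p : G.Walk u v).support) h
    simp only [hsupA, hsupB] at h2
    have : a.1 = b.1 := by simpa using h2
    exact hABne a.1 b.1 (hNAfact a.1 a.2).1 (hNBfact b.1 b.2).1 this
  have hAneC : ∀ a b, fA a ≠ fC b := by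
    intro a b h
    have h2 := congrArg (fun p : G.Path u v => (p : G.Walk u v).support) h
    simp only [hsupA, hsupC] at h2
    simp at h2
  have hBneC : ∀ a b, fB a ≠ fC b := by
    intro a b h
    have h2 := congrArg (fun p : G.Path u v => (p : G.Walk u v).support) h
    simp only [hsupB, hsupC] at h2
    simp at h2
  have h0notin : p0 ∉ NA.attach.image fA ∪ NB.attach.image fB ∪ B''.attach.image fC := by
    simp only [Finset.mem_union, Finset.mem_image, not_or]
    refine ⟨⟨?_, ?_⟩, ?_⟩ <;> rintro ⟨x, -, hx⟩
    · exact h0A x hx.symm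
    · exact h0B x hx.symm
    · exact h0C x hx.symm
  have hdAB : Disjoint (NA.attach.image fA) (NB.attach.image fB) := by
    rw [Finset.disjoint_left]
    rintro p hp hq
    obtain ⟨a, -, rfl⟩ := Finset.mem_image.mp hp
    obtain ⟨b, -, hb⟩ := Finset.mem_image.mp hq
    exact hAneB a b hb.symm
  have hdAC : Disjoint (NA.attach.image fA) (B''.attach.image fC) := by
    rw [Finset.disjoint_left]
    rintro p hp hq
    obtain ⟨a, -, rfl⟩ := Finset.mem_image.mp hp
    obtain ⟨b, -, hb⟩ := Finset.mem_image.mp hq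
    exact hAneC a b hb.symm
  have hdBC : Disjoint (NB.attach.image fB) (B''.attach.image fC) := by
    rw [Finset.disjoint_left]
    rintro p hp hq
    obtain ⟨a, -, rfl⟩ := Finset.mem_image.mp hp
    obtain ⟨b, -, hb⟩ := Finset.mem_image.mp hq
    exact hBneC a b hb.symm
  have hcardF : F.card = 1 + NA.card + NB.card + k := by
    rw [hFdef, Finset.card_insert_of_notMem h0notin,
      Finset.card_union_of_disjoint (Finset.disjoint_union_left.mpr ⟨hdAC, hdBC⟩),
      Finset.card_union_of_disjoint hdAB,
      Finset.card_image_of_injective _ hinjA, Finset.card_image_of_injective _ hinjB,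
      Finset.card_image_of_injective _ hinjC, Finset.card_attach, Finset.card_attach,
      Finset.card_attach, hB''card]
    omega
  -- membership characterization
  have hF : ∀ p ∈ F, p = p0 ∨ (∃ a, p = fA a) ∨ (∃ b, p = fB b) ∨ (∃ b, p = fC b) := by
    intro p hp
    rw [hFdef, Finset.mem_insert, Finset.mem_union, Finset.mem_union] at hp
    rcases hp with h | (h | h) | h
    · exact Or.inl h
    · obtain ⟨a, -, rfl⟩ := Finset.mem_image.mp h
      exact Or.inr (Or.inl ⟨a, rfl⟩)
    · obtain ⟨b, -, rfl⟩ := Finset.mem_image.mp h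
      exact Or.inr (Or.inr (Or.inl ⟨b, rfl⟩))
    · obtain ⟨b, -, rfl⟩ := Finset.mem_image.mp h
      exact Or.inr (Or.inr (Or.inr ⟨b, rfl⟩))
  refine ⟨↑F, by rw [Set.ncard_coe_finset, hcardF, hmin], ?_⟩
  intro p hp q hq hpq
  rw [Finset.mem_coe] at hp hq
  have hNeAB : ∀ (x y : V), x ∈ A → y ∈ B → x ≠ y := hABne
  rcases hF p hp with rfl | ⟨a, rfl⟩ | ⟨b, rfl⟩ | ⟨b, rfl⟩ <;>
    rcases hF q hq with rfl | ⟨a2, rfl⟩ | ⟨b2, rfl⟩ | ⟨b2, rfl⟩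
  -- p = p0
  · exact absurd rfl hpq
  · exact id_of_internals _ _ [] [↑a2] hsup0 (hsupA a2) (by simp)
  · exact id_of_internals _ _ [] [↑b2] hsup0 (hsupB b2) (by simp)
  · exact id_of_internals _ _ [] [↑b2, ↑(e b2)] hsup0 (hsupC b2) (by simp)
  -- p = fA a
  · exact id_of_internals _ _ [↑a] [] (hsupA a) hsup0 (by simp)
  · refine id_of_internals _ _ [↑a] [↑a2] (hsupA a) (hsupA a2) ?_
    intro w hw hw2
    have h1 : w = ↑a := by simpa using hw
    have h2 : w = ↑a2 := by simpa using hw2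
    exact hpq (congrArg fA (Subtype.ext (h1 ▸ h2)))
  · refine id_of_internals _ _ [↑a] [↑b2] (hsupA a) (hsupB b2) ?_
    intro w hw hw2
    have h1 : w = ↑a := by simpa using hw
    have h2 : w = ↑b2 := by simpa using hw2
    exact hNeAB _ _ (hNAfact a.1 a.2).1 (hNBfact b2.1 b2.2).1 (h1 ▸ h2)
  · refine id_of_internals _ _ [↑a] [↑b2, ↑(e b2)] (hsupA a) (hsupC b2) ?_
    intro w hw hw2
    have h1 : w = ↑a := by simpa using hw
    have h2 : w = ↑b2 ∨ w = ↑(e b2) := by simpa using hw2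
    subst h1
    rcases h2 with h2 | h2
    · exact hNeAB _ _ (hNAfact a.1 a.2).1 (hB''B b2.1 b2.2).1 h2
    · exact (hA''A (e b2).1 (e b2).2).2.2 (h2 ▸ a.2)
  -- p = fB b
  · exact id_of_internals _ _ [↑b] [] (hsupB b) hsup0 (by simp)
  · refine id_of_internals _ _ [↑b] [↑a2] (hsupB b) (hsupA a2) ?_
    intro w hw hw2
    have h1 : w = ↑b := by simpa using hw
    have h2 : w = ↑a2 := by simpa using hw2
    exact hNeAB _ _ (hNAfact a2.1 a2.2).1 (hNBfact b.1 b.2).1 (h1 ▸ h2).symm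
  · refine id_of_internals _ _ [↑b] [↑b2] (hsupB b) (hsupB b2) ?_
    intro w hw hw2
    have h1 : w = ↑b := by simpa using hw
    have h2 : w = ↑b2 := by simpa using hw2
    exact hpq (congrArg fB (Subtype.ext (h1 ▸ h2)))
  · refine id_of_internals _ _ [↑b] [↑b2, ↑(e b2)] (hsupB b) (hsupC b2) ?_
    intro w hw hw2
    have h1 : w = ↑b := by simpa using hw
    have h2 : w = ↑b2 ∨ w = ↑(e b2) := by simpa using hw2
    subst h1
    rcases h2 with h2 | h2
    · exact (hB''B b2.1 b2.2).2.2 (h2 ▸ b.2)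
    · exact hNeAB _ _ (hA''A (e b2).1 (e b2).2).1 (hNBfact b.1 b.2).1 h2.symm
  -- p = fC b
  · exact id_of_internals _ _ [↑b, ↑(e b)] [] (hsupC b) hsup0 (by simp)
  · refine id_of_internals _ _ [↑b, ↑(e b)] [↑a2] (hsupC b) (hsupA a2) ?_
    intro w hw hw2
    have h1 : w = ↑b ∨ w = ↑(e b) := by simpa using hw
    have h2 : w = ↑a2 := by simpa using hw2
    subst h2
    rcases h1 with h1 | h1
    · exact hNeAB _ _ (hNAfact a2.1 a2.2).1 (hB''B b.1 b.2).1 h1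
    · exact (hA''A (e b).1 (e b).2).2.2 (h1 ▸ a2.2)
  · refine id_of_internals _ _ [↑b, ↑(e b)] [↑b2] (hsupC b) (hsupB b2) ?_
    intro w hw hw2
    have h1 : w = ↑b ∨ w = ↑(e b) := by simpa using hw
    have h2 : w = ↑b2 := by simpa using hw2
    subst h2
    rcases h1 with h1 | h1
    · exact (hB''B b.1 b.2).2.2 (h1 ▸ b2.2)
    · exact hNeAB _ _ (hA''A (e b).1 (e b).2).1 (hNBfact b2.1 b2.2).1 h1.symm
  · refine id_of_internals _ _ [↑b, ↑(e b)] [↑b2, ↑(e b2)] (hsupC b) (hsupC b2) ?_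
    have hbne : b ≠ b2 := fun h => hpq (congrArg fC h)
    have hene : e b ≠ e b2 := fun h => hbne (e.injective h)
    intro w hw hw2
    have h1 : w = ↑b ∨ w = ↑(e b) := by simpa using hw
    have h2 : w = ↑b2 ∨ w = ↑(e b2) := by simpa using hw2
    rcases h1 with rfl | rfl
    · rcases h2 with h2 | h2
      · exact hbne (Subtype.ext h2)
      · exact hNeAB _ _ (hA''A (e b2).1 (e b2).2).1 (hB''B b.1 b.2).1 h2.symm
    · rcases h2 with h2 | h2
      · exact hNeAB _ _ (hA''A (e b).1 (e b).2).1 (hB''B b2.1 b2.2).1 h2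
      · exact hene (Subtype.ext h2)

end SimpleGraph



/-- If `G` is the join of two vertex-disjoint graphs (with vertex sets `A` and `B`),
then for every `u ∈ A` and `v ∈ B`, the local connectivity `κ_G(u,v)` equals
`min {d_G(u), d_G(v)}`. -/
theorem stmt_2 {V : Type*} [Fintype V] [DecidableEq V] (G : SimpleGraph V) (A B : Finset V)
    (hdisj : Disjoint A B) (hcover : A ∪ B = Finset.univ)
    (hjoin : ∀ a ∈ A, ∀ b ∈ B, G.Adj a b)
    (u v : V) (hu : u ∈ A) (hv : v ∈ B) :
    G.localConnectivity u v = min (G.deg u) (G.deg v) := by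
  classical
  obtain ⟨P, hPcard, hPpw⟩ := aux_lb G A B hdisj hcover hjoin u v hu hv
  have hne : u ≠ v := (hjoin u hu v hv).ne
  have hbdd : ∀ n ∈ {n | ∃ P : Set (G.Path u v), P.ncard = n ∧
      P.Pairwise fun p q => SimpleGraph.InternallyDisjoint (p : G.Walk u v) (q : G.Walk u v)},
      n ≤ min (G.deg u) (G.deg v) := by
    rintro n ⟨Q, rfl, hQ⟩
    refine le_min (aux_ub hne Q hQ) ?_
    obtain ⟨R, hRcard, hRpw⟩ := aux_rev Q hQ
    rw [← hRcard]
    exact aux_ub (Ne.symm hne) R hRpw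
  have hmem : min (G.deg u) (G.deg v) ∈ {n | ∃ P : Set (G.Path u v), P.ncard = n ∧
      P.Pairwise fun p q => SimpleGraph.InternallyDisjoint (p : G.Walk u v) (q : G.Walk u v)} :=
    ⟨P, hPcard, hPpw⟩
  apply le_antisymm
  · exact csSup_le ⟨_, hmem⟩ hbdd
  · exact le_csSup ⟨_, hbdd⟩ hmem
end

section
/- If e = uv is a dominating edge in a graph G, then no separator of G is a u–v separator in G − e. -/
open SimpleGraph
open scoped ENNReal NNReal

/-- A vertex is universal if it is adjacent to all other vertices. -/
def SimpleGraph.IsUniversalVertex {V : Type*} (G : SimpleGraph V) (v : V) : Prop :=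
  ∀ w, w ≠ v → G.Adj v w

/-- `S` is a `u`-`v` separator of `H` if `S` avoids `u` and `v` and every `u`-`v` walk
in `H` meets `S`. -/
def IsUVSeparator {V : Type*} (H : SimpleGraph V) (u v : V) (S : Finset V) : Prop :=
  u ∉ S ∧ v ∉ S ∧ ∀ p : H.Walk u v, ∃ w ∈ p.support, w ∈ S

/-- If `e = uv` is a dominating edge in `G`, then no separator of `G` is a `u`-`v`
separator in `G − e`. -/
theorem stmt_6 {V : Type*} [Fintype V] (G : SimpleGraph V) (u v : V) (huv : G.Adj u v)
    (hdom : G.neighborSet u ∪ G.neighborSet v = Set.univ) :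
    ∀ S : Finset V, G.IsSeparator S → ¬ IsUVSeparator (G.deleteEdges {s(u, v)}) u v S := by
  intro S hsep hUV
  obtain ⟨hu, hv, -⟩ := hUV
  set s : Set V := ((↑S : Set V)ᶜ) with hs
  have hu' : u ∈ s := hu
  have hv' : v ∈ s := hv
  have key : ∀ w : s, (G.induce s).Reachable w ⟨u, hu'⟩ := by
    intro w
    have hw : (w : V) ∈ G.neighborSet u ∪ G.neighborSet v := by
      rw [hdom]; trivial
    rcases hw with h | h
    · exact (SimpleGraph.Adj.reachable (by simpa using h.symm : (G.induce s).Adj w ⟨u, hu'⟩))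
    · have h1 : (G.induce s).Adj w ⟨v, hv'⟩ := by simpa using h.symm
      have h2 : (G.induce s).Adj ⟨v, hv'⟩ ⟨u, hu'⟩ := by simpa using huv.symm
      exact h1.reachable.trans h2.reachable
  haveI : Nonempty s := ⟨⟨u, hu'⟩⟩
  have hconn : (G.induce s).Connected :=
    ⟨fun a b => (key a).trans (key b).symm⟩
  have h1 : componentCount (G.induce s) = 1 := by
    rw [componentCount, Nat.card_eq_one_iff_unique]
    constructor
    · constructor
      intro a b
      obtain ⟨x, rfl⟩ := a.exists_rep
      obtain ⟨y, rfl⟩ := b.exists_rep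
      exact SimpleGraph.ConnectedComponent.sound (hconn x y)
    · exact ⟨SimpleGraph.connectedComponentMk _ ⟨u, hu'⟩⟩
  have := hsep
  rw [SimpleGraph.IsSeparator, ← hs, h1] at this
  omega
end

section
/- Every non-complete minimally tough graph has at most one universal vertex. -/
open SimpleGraph
open scoped ENNReal NNReal

/-- A vertex is universal if it is adjacent to all other vertices. -/
def SimpleGraph.IsUniversalVtx {V : Type*} (G : SimpleGraph V) (v : V) : Prop :=
  ∀ w, w ≠ v → G.Adj v w

lemma compCount_le {α : Type*} (H : SimpleGraph α) [Finite α] :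
    componentCount H ≤ Nat.card α :=
  Nat.card_le_card_of_surjective H.connectedComponentMk (Quot.exists_rep)

lemma compCount_conn {α : Type*} (H : SimpleGraph α) (h : H.Connected) :
    componentCount H = 1 := by
  rw [componentCount, Nat.card_eq_one_iff_unique]
  refine ⟨⟨fun c d => ?_⟩, ⟨H.connectedComponentMk h.nonempty.some⟩⟩
  refine ConnectedComponent.ind₂ (fun a b => ?_) c d
  exact ConnectedComponent.sound (h.preconnected a b)

lemma two_le_compCount {α : Type*} (H : SimpleGraph α) [Finite α] {a b : α}
    (h : ¬ H.Reachable a b) : 2 ≤ componentCount H := by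
  have hne : H.connectedComponentMk a ≠ H.connectedComponentMk b := by
    intro he; exact h (ConnectedComponent.exact he)
  exact Finite.one_lt_card_iff_nontrivial.mpr ⟨_, _, hne⟩

lemma induce_deleteEdges_eq {V : Type*} (G : SimpleGraph V) {v w : V} {s : Set V}
    (hv : v ∉ s) : ((G.deleteEdges {s(v, w)}).induce s) = G.induce s := by
  ext a b
  simp only [comap_adj, Function.Embedding.coe_subtype, deleteEdges_adj,
    Set.mem_singleton_iff, and_iff_left_iff_imp]
  intro _ h
  have hmem : v ∈ s((a : V), (b : V)) := by
    rw [h]; exact Sym2.mem_mk_left v w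
  rcases Sym2.mem_iff.mp hmem with h' | h'
  · exact hv (h' ▸ a.2)
  · exact hv (h' ▸ b.2)

lemma hub_conn {V : Type*} (G : SimpleGraph V) {v w : V}
    (hv : G.IsUniversalVtx v) (hw : G.IsUniversalVtx w)
    {s : Set V} (hws : w ∈ s) {u : V} (hus : u ∈ s)
    (huv : u ≠ v) (huw : u ≠ w) :
    ((G.deleteEdges {s(v, w)}).induce s).Connected := by
  rw [connected_iff]
  refine ⟨fun a b => ?_, ⟨⟨u, hus⟩⟩⟩
  have key : ∀ a : s, ((G.deleteEdges {s(v, w)}).induce s).Reachable a ⟨u, hus⟩ := by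
    rintro ⟨a, ha⟩
    rcases eq_or_ne a u with rfl | hau
    · exact Reachable.refl _
    rcases eq_or_ne a v with rfl | hav
    · -- a = v : adjacent to u
      refine Adj.reachable ?_
      simp only [comap_adj, Function.Embedding.coe_subtype, deleteEdges_adj,
        Set.mem_singleton_iff]
      refine ⟨hv u huv, fun hc => ?_⟩
      exact huw (Sym2.congr_right.mp hc)
    have haw_adj : ((G.deleteEdges {s(v, w)}).induce s).Adj ⟨w, hws⟩ ⟨u, hus⟩ := by
      simp only [comap_adj, Function.Embedding.coe_subtype, deleteEdges_adj,
        Set.mem_singleton_iff]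
      refine ⟨hw u huw, fun hc => ?_⟩
      rcases Sym2.eq_iff.mp hc with ⟨_, h2⟩ | ⟨_, h2⟩
      · exact huw h2
      · exact huv h2
    rcases eq_or_ne a w with rfl | haw
    · exact haw_adj.reachable
    · refine Reachable.trans (Adj.reachable (v := ⟨w, hws⟩) ?_) haw_adj.reachable
      simp only [comap_adj, Function.Embedding.coe_subtype, deleteEdges_adj,
        Set.mem_singleton_iff]
      refine ⟨(hw a haw).symm, fun hc => ?_⟩
      rcases Sym2.eq_iff.mp hc with ⟨h1, _⟩ | ⟨h2, _⟩
      · exact hav h1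
      · exact haw h2
  exact (key a).trans (key b).symm

lemma induce_pair_eq_bot {V : Type*} (G : SimpleGraph V) {x y : V}
    (hxy : ¬ G.Adj x y) : (G.induce ({x, y} : Set V)) = ⊥ := by
  ext ⟨a, ha⟩ ⟨b, hb⟩
  simp only [comap_adj, Function.Embedding.coe_subtype, bot_adj, iff_false]
  intro hadj
  rcases ha with rfl | ha
  · rcases hb with rfl | hb
    · exact hadj.ne rfl
    · rw [Set.mem_singleton_iff] at hb; subst hb; exact hxy hadj
  · rw [Set.mem_singleton_iff] at ha; subst ha
    rcases hb with rfl | hb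
    · exact hxy hadj.symm
    · rw [Set.mem_singleton_iff] at hb; subst hb; exact hadj.ne rfl

lemma compCount_pair_eq_two {V : Type*} [Fintype V] (G : SimpleGraph V) {x y : V}
    (hne : x ≠ y) (hxy : ¬ G.Adj x y) :
    componentCount (G.induce ({x, y} : Set V)) = 2 := by
  refine le_antisymm ?_ ?_
  · calc componentCount (G.induce ({x, y} : Set V)) ≤ Nat.card ({x, y} : Set V) :=
          compCount_le _
      _ = ({x, y} : Set V).ncard := Nat.card_coe_set_eq _
      _ = 2 := Set.ncard_pair hne
  · refine two_le_compCount _ (a := ⟨x, by simp⟩) (b := ⟨y, by simp⟩) ?_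
    rw [induce_pair_eq_bot G hxy, reachable_bot]
    intro h
    exact hne (congrArg Subtype.val h)

/-- Every non-complete minimally tough graph has at most one universal vertex. -/
theorem stmt_7 {V : Type*} [Fintype V] (G : SimpleGraph V) (hnc : G ≠ ⊤)
    (hmin : G.MinimallyTough) (v w : V) (hv : G.IsUniversalVtx v) (hw : G.IsUniversalVtx w) :
    v = w := by
  classical
  by_contra hne
  -- non-adjacent pair
  obtain ⟨x, y, hxyne, hxy⟩ : ∃ x y, x ≠ y ∧ ¬ G.Adj x y := by
    by_contra hc
    push_neg at hc
    exact hnc (by ext a b; simp only [top_adj]; exact ⟨fun h => h.ne, fun h => hc a b h⟩)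
  have he : s(v, w) ∈ G.edgeSet := (hv w (Ne.symm hne))
  set G' := G.deleteEdges {s(v, w)} with hG'
  -- the key: toughness G ≤ toughness G'
  have hle : G.toughness ≤ G'.toughness := by
    rw [SimpleGraph.toughness]
    refine le_iInf fun S => le_iInf fun hS => ?_
    by_cases hvS : v ∈ S
    · -- deleted edge endpoint in S : induced graphs agree
      have heq : G'.induce ((↑S : Set V)ᶜ) = G.induce ((↑S : Set V)ᶜ) :=
        induce_deleteEdges_eq G (by simp [hvS])
      have hSsep : G.IsSeparator S := by
        rw [SimpleGraph.IsSeparator, ← heq]; exact hS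
      calc G.toughness ≤ (S.card : ℝ≥0∞) / (componentCount (G.induce ((↑S : Set V)ᶜ)) : ℝ≥0∞) :=
            iInf₂_le S hSsep
        _ = _ := by rw [heq]
    · by_cases hwS : w ∈ S
      · have heq : G'.induce ((↑S : Set V)ᶜ) = G.induce ((↑S : Set V)ᶜ) := by
          rw [hG', show s(v, w) = s(w, v) from Sym2.eq_swap]
          exact induce_deleteEdges_eq G (by simp [hwS])
        have hSsep : G.IsSeparator S := by
          rw [SimpleGraph.IsSeparator, ← heq]; exact hS
        calc G.toughness ≤ (S.card : ℝ≥0∞) / (componentCount (G.induce ((↑S : Set V)ᶜ)) : ℝ≥0∞) :=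
              iInf₂_le S hSsep
          _ = _ := by rw [heq]
      · -- both v, w outside S
        have hvs : v ∈ ((↑S : Set V)ᶜ) := by simp [hvS]
        have hws : w ∈ ((↑S : Set V)ᶜ) := by simp [hwS]
        -- no third vertex outside S
        have hsub : ((↑S : Set V)ᶜ) ⊆ {v, w} := by
          intro u hu
          by_contra hmem
          simp only [Set.mem_insert_iff, Set.mem_singleton_iff, not_or] at hmem
          have hconn := hub_conn G hv hw hws hu hmem.1 hmem.2
          have := compCount_conn _ hconn
          rw [SimpleGraph.IsSeparator, this] at hS
          omega
        have hseq : ((↑S : Set V)ᶜ) = {v, w} := by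
          refine subset_antisymm hsub ?_
          intro u hu
          rcases hu with rfl | hu
          · exact hvs
          · rw [Set.mem_singleton_iff] at hu; subst hu; exact hws
        -- S is the complement of {v, w}
        have hScompl : S = ({v, w} : Finset V)ᶜ := by
          apply Finset.coe_injective
          rw [Finset.coe_compl, Finset.coe_insert, Finset.coe_singleton, ← hseq, compl_compl]
        have hScard : S.card = Fintype.card V - 2 := by
          rw [hScompl, Finset.card_compl, Finset.card_pair hne]
        -- component count of G' on {v, w} is 2
        have hcc2 : componentCount (G'.induce ((↑S : Set V)ᶜ)) = 2 := by
          refine le_antisymm ?_ hS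
          calc componentCount (G'.induce ((↑S : Set V)ᶜ)) ≤ Nat.card ((↑S : Set V)ᶜ : Set V) :=
                compCount_le _
            _ = ((↑S : Set V)ᶜ).ncard := Nat.card_coe_set_eq _
            _ = 2 := by rw [hseq]; exact Set.ncard_pair hne
        -- the separator T = {x, y}ᶜ of G
        set T : Finset V := ({x, y} : Finset V)ᶜ with hT
        have hTs : ((↑T : Set V)ᶜ) = ({x, y} : Set V) := by
          rw [hT, Finset.coe_compl, compl_compl, Finset.coe_insert, Finset.coe_singleton]
        have hTcc : componentCount (G.induce ((↑T : Set V)ᶜ)) = 2 := by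
          rw [hTs]; exact compCount_pair_eq_two G hxyne hxy
        have hTsep : G.IsSeparator T := by rw [SimpleGraph.IsSeparator, hTcc]
        have hTcard : T.card = Fintype.card V - 2 := by
          rw [hT, Finset.card_compl, Finset.card_pair hxyne]
        calc G.toughness ≤ (T.card : ℝ≥0∞) / (componentCount (G.induce ((↑T : Set V)ᶜ)) : ℝ≥0∞) :=
              iInf₂_le T hTsep
          _ = (S.card : ℝ≥0∞) / (componentCount (G'.induce ((↑S : Set V)ᶜ)) : ℝ≥0∞) := by
              rw [hTcc, hcc2, hTcard, hScard]
  exact absurd (hmin _ he) (not_lt.mpr hle)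
end

section
/- If G is a ⌈2t⌉-regular graph where t is the toughness of G, then G is minimally tough. -/
open SimpleGraph
open scoped ENNReal NNReal

/-- If `G` is `⌈2t⌉`-regular, where `t` is the toughness of `G`, then `G` is minimally
tough. -/
theorem stmt_8 {V : Type*} [Fintype V] (G : SimpleGraph V) (t : ℝ≥0)
    (ht : G.toughness = (t : ℝ≥0∞)) (hreg : G.RegularOfDegree ⌈2 * t⌉₊) :
    G.MinimallyTough := by
  classical
  intro e he
  induction e using Sym2.ind with
  | _ u v =>
  rw [SimpleGraph.mem_edgeSet] at he
  set d : ℕ := ⌈2 * t⌉₊ with hd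
  set G' : SimpleGraph V := G.deleteEdges {s(u, v)} with hG'
  -- S = neighbours of u in G'
  have hNfin : (G'.neighborSet u).Finite := Set.toFinite _
  set S : Finset V := hNfin.toFinset with hS
  have hmemS : ∀ w, w ∈ S ↔ G'.Adj u w := by
    intro w; simp [hS, hNfin.mem_toFinset, SimpleGraph.mem_neighborSet]
  -- G'.neighborSet u = G.neighborSet u \ {v}
  have hNeq : G'.neighborSet u = G.neighborSet u \ {v} := by
    ext w
    simp only [SimpleGraph.mem_neighborSet, hG', SimpleGraph.deleteEdges_adj,
      Set.mem_diff, Set.mem_singleton_iff, Set.mem_singleton_iff]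
    constructor
    · rintro ⟨h1, h2⟩
      refine ⟨h1, ?_⟩
      rintro rfl; exact h2 rfl
    · rintro ⟨h1, h2⟩
      refine ⟨h1, ?_⟩
      intro hs
      rw [Sym2.eq_iff] at hs
      rcases hs with ⟨-, rfl⟩ | ⟨rfl, rfl⟩
      · exact h2 rfl
      · exact G.loopless.irrefl _ h1
  have hune : u ≠ v := G.ne_of_adj he
  have hd1 : 1 ≤ d := by
    have := hreg u
    rw [SimpleGraph.deg] at this
    have hv : v ∈ G.neighborSet u := he
    have h0 : 0 < (G.neighborSet u).ncard := (Set.ncard_pos (Set.toFinite _)).2 ⟨v, hv⟩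
    omega
  have hScard : S.card = d - 1 := by
    have : S.card = (G'.neighborSet u).ncard := (Set.ncard_eq_toFinset_card _ hNfin).symm
    rw [this, hNeq,
      Set.ncard_diff_singleton_of_mem (show v ∈ G.neighborSet u from he)]
    have := hreg u
    rw [SimpleGraph.deg] at this
    rw [this]
  -- u, v not in S
  have huS : u ∉ S := by
    rw [hmemS]; exact fun h => G'.loopless.irrefl u h
  have hvS : v ∉ S := by
    rw [hmemS]
    intro h
    rw [hG', SimpleGraph.deleteEdges_adj] at h
    exact h.2 rfl
  -- the induced graph
  set H := G'.induce ((↑S : Set V)ᶜ) with hH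
  have huc : (u : V) ∈ ((↑S : Set V)ᶜ) := by simpa using huS
  have hvc : (v : V) ∈ ((↑S : Set V)ᶜ) := by simpa using hvS
  -- u is isolated in H
  have hiso : ∀ w : ((↑S : Set V)ᶜ : Set V), ¬ H.Adj ⟨u, huc⟩ w := by
    rintro ⟨w, hw⟩ hadj
    rw [hH] at hadj
    simp only [SimpleGraph.comap_adj, Function.Embedding.coe_subtype] at hadj
    have : w ∈ S := (hmemS w).2 hadj
    exact hw (by simpa using this)
  have hnr : ¬ H.Reachable ⟨u, huc⟩ ⟨v, hvc⟩ := by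
    intro hr
    obtain ⟨p⟩ := hr
    cases p with
    | nil => exact hune (by simp)
    | cons h _ => exact hiso _ h
  have hsep : G'.IsSeparator S := by
    rw [SimpleGraph.IsSeparator]
    have : Nontrivial H.ConnectedComponent :=
      ⟨H.connectedComponentMk ⟨u, huc⟩, H.connectedComponentMk ⟨v, hvc⟩,
        fun hc => hnr (SimpleGraph.ConnectedComponent.exact hc)⟩
    exact Finite.one_lt_card_iff_nontrivial.mpr this
  have hcc : 2 ≤ (componentCount H : ℝ≥0∞) := by
    exact_mod_cast hsep
  -- toughness bound
  have hle : G'.toughness ≤ (S.card : ℝ≥0∞) / (componentCount H : ℝ≥0∞) := by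
    rw [SimpleGraph.toughness]
    exact iInf₂_le S hsep
  have hle2 : (S.card : ℝ≥0∞) / (componentCount H : ℝ≥0∞) ≤ (S.card : ℝ≥0∞) / 2 := by
    gcongr
  have hlt : ((d - 1 : ℕ) : ℝ≥0∞) / 2 < (t : ℝ≥0∞) := by
    rw [ENNReal.div_lt_iff (by norm_num) (by norm_num)]
    have h1 : ((d : ℝ≥0)) < 2 * t + 1 := Nat.ceil_lt_add_one (by positivity)
    have h2 : ((d - 1 : ℕ) : ℝ≥0) < t * 2 := by
      have hdd : ((d - 1 : ℕ) : ℝ≥0) + 1 = (d : ℝ≥0) := by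
        have hn : (d - 1) + 1 = d := Nat.succ_pred_eq_of_pos hd1
        exact_mod_cast congrArg (Nat.cast : ℕ → ℝ≥0) hn
      rw [← hdd, mul_comm 2 t] at h1
      exact lt_of_add_lt_add_right h1
    exact_mod_cast h2
  calc G'.toughness ≤ (S.card : ℝ≥0∞) / (componentCount H : ℝ≥0∞) := hle
    _ ≤ (S.card : ℝ≥0∞) / 2 := hle2
    _ = ((d - 1 : ℕ) : ℝ≥0∞) / 2 := by rw [hScard]
    _ < (t : ℝ≥0∞) := hlt
    _ = G.toughness := ht.symm
end

section
/- Let n = n₁ + ⋯ + n_k with 1 ≤ n₁ ≤ ⋯ ≤ n_k and n_k > 1. Then the toughness of the complete multipartite graph K_{n₁,…,n_k} equals n/n_k − 1. -/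
open SimpleGraph
open scoped ENNReal NNReal

lemma componentCount_of_edgeless {V : Type*} (G : SimpleGraph V)
    (h : ∀ u v, ¬ G.Adj u v) : componentCount G = Nat.card V := by
  have hbij : Function.Bijective (G.connectedComponentMk) := by
    constructor
    · intro u v huv
      obtain ⟨w⟩ := SimpleGraph.ConnectedComponent.eq.mp huv
      cases w with
      | nil => rfl
      | cons h' _ => exact absurd h' (h _ _)
    · exact fun c => c.exists_rep
  exact (Nat.card_eq_of_bijective _ hbij).symm

lemma componentCount_of_connected {V : Type*} (G : SimpleGraph V)
    (h : G.Connected) : componentCount G = 1 := by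
  have hs : Subsingleton G.ConnectedComponent := by
    constructor
    intro a b
    refine SimpleGraph.ConnectedComponent.ind₂ (fun u v => ?_) a b
    exact SimpleGraph.ConnectedComponent.sound (h.preconnected u v)
  have hn : Nonempty G.ConnectedComponent := by
    obtain ⟨v⟩ := h.nonempty
    exact ⟨G.connectedComponentMk v⟩
  exact Nat.card_eq_one_iff_unique.mpr ⟨hs, hn⟩

lemma ennreal_sub_div (N K : ℕ) (hK : K ≠ 0) (hKN : K ≤ N) :
    ((N - K : ℕ) : ℝ≥0∞) / K = (N : ℝ≥0∞) / K - 1 := by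
  refine (ENNReal.sub_eq_of_eq_add ENNReal.one_ne_top ?_).symm
  have h1 : (1 : ℝ≥0∞) = (K : ℝ≥0∞) / K :=
    (ENNReal.div_self (by exact_mod_cast hK) (ENNReal.natCast_ne_top K)).symm
  rw [h1, ENNReal.div_add_div_same]
  congr 1
  exact_mod_cast (Nat.sub_add_cancel hKN).symm

def partEquiv {k : ℕ} (n : Fin (k + 1) → ℕ) (i : Fin (k + 1)) :
    {x : Σ j, Fin (n j) // x.1 = i} ≃ Fin (n i) where
  toFun x := Fin.cast (congrArg n x.2) x.1.2
  invFun a := ⟨⟨i, a⟩, rfl⟩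
  left_inv := by rintro ⟨⟨j, a⟩, rfl⟩; rfl
  right_inv := fun a => rfl


/-- The toughness of the complete multipartite graph with parts of sizes
`n 0 ≤ … ≤ n k`, where `n k > 1`, equals `n / n_k − 1` where `n` is the number of
vertices. -/
theorem stmt_10 (k : ℕ) (n : Fin (k + 1) → ℕ) (hmono : Monotone n) (h1 : 1 ≤ n 0)
    (hbig : 1 < n (Fin.last k)) :
    (completeMultipartiteGraph fun i => Fin (n i)).toughness =
      ((∑ i, n i : ℕ) : ℝ≥0∞) / (n (Fin.last k) : ℝ≥0∞) - 1 := by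
  classical
  set G := completeMultipartiteGraph fun i => Fin (n i) with hG
  set N := ∑ i, n i with hN
  set K := n (Fin.last k) with hK
  have hKpos : 0 < K := lt_trans Nat.zero_lt_one hbig
  have hKN : K ≤ N := Finset.single_le_sum (fun i _ => Nat.zero_le _) (Finset.mem_univ _)
  have hcardV : Fintype.card ((i : Fin (k+1)) × Fin (n i)) = N := by
    simp [Fintype.card_sigma, hN]
  have hpartcard : ∀ i, Nat.card {x : Σ j, Fin (n j) // x.1 = i} = n i := by
    intro i
    rw [Nat.card_congr (partEquiv n i)]
    simp
  apply le_antisymm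
  · set S₀ : Finset ((i : Fin (k+1)) × Fin (n i)) :=
      (Finset.univ.filter (fun x => x.1 = Fin.last k))ᶜ with hS₀
    have hTset : ((↑S₀ : Set ((i : Fin (k+1)) × Fin (n i)))ᶜ)
        = {x : (i : Fin (k+1)) × Fin (n i) | x.1 = Fin.last k} := by
      ext x; simp [hS₀]
    have hcount : componentCount (G.induce ((↑S₀ : Set _)ᶜ)) = K := by
      rw [componentCount_of_edgeless]
      · rw [hTset]
        exact hpartcard (Fin.last k)
      · rintro ⟨u, hu⟩ ⟨v, hv⟩ hadj
        rw [hTset] at hu hv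
        simp only [Set.mem_setOf_eq] at hu hv
        simp only [hG, SimpleGraph.comap_adj, SimpleGraph.induce, completeMultipartiteGraph,
          SimpleGraph.top_adj] at hadj
        exact hadj (hu.trans hv.symm)
    have hsep : G.IsSeparator S₀ := by
      rw [SimpleGraph.IsSeparator, hcount]; exact hbig
    have hcard : S₀.card = N - K := by
      rw [hS₀, Finset.card_compl, hcardV]
      congr 1
      rw [← Fintype.card_subtype, ← Nat.card_eq_fintype_card]
      exact hpartcard (Fin.last k)
    have hle := iInf₂_le (f := fun (S : Finset ((i : Fin (k+1)) × Fin (n i)))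
      (_ : G.IsSeparator S) =>
      (S.card : ℝ≥0∞) / (componentCount (G.induce ((↑S : Set _)ᶜ)) : ℝ≥0∞)) S₀ hsep
    refine le_trans hle ?_
    rw [hcard, hcount, ennreal_sub_div N K hKpos.ne' hKN]
  · refine le_iInf₂ (fun S hsep => ?_)
    set T : Set ((i : Fin (k+1)) × Fin (n i)) := ((↑S : Set _)ᶜ) with hT
    have hadj_iff : ∀ u v : ↥T, (G.induce T).Adj u v ↔ u.1.1 ≠ v.1.1 := by
      intro u v
      simp [hG, SimpleGraph.induce, completeMultipartiteGraph]
    have hsame : ∀ x ∈ T, ∀ y ∈ T, x.1 = y.1 := by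
      by_contra hcon
      push_neg at hcon
      obtain ⟨x, hx, y, hy, hxy⟩ := hcon
      have hne : Nonempty ↥T := ⟨⟨x, hx⟩⟩
      have hconn : (G.induce T).Connected := by
        refine ⟨fun u v => ?_⟩
        by_cases h : u.1.1 = v.1.1
        · obtain ⟨w, hw, hwu⟩ : ∃ w ∈ T, w.1 ≠ u.1.1 := by
            by_cases hxu : x.1 = u.1.1
            · exact ⟨y, hy, fun hh => hxy (hxu.trans hh.symm)⟩
            · exact ⟨x, hx, hxu⟩
          have h1 : (G.induce T).Adj u ⟨w, hw⟩ := (hadj_iff _ _).mpr (fun hh => hwu hh.symm)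
          have h2 : (G.induce T).Adj ⟨w, hw⟩ v := (hadj_iff _ _).mpr (fun hh => hwu (hh.trans h.symm))
          exact h1.reachable.trans h2.reachable
        · exact SimpleGraph.Adj.reachable ((hadj_iff _ _).mpr h)
      have hone := componentCount_of_connected _ hconn
      rw [SimpleGraph.IsSeparator] at hsep
      rw [← hT] at hsep
      omega
    have hcount : componentCount (G.induce T) = Nat.card ↥T := by
      apply componentCount_of_edgeless
      rintro ⟨u, hu⟩ ⟨v, hv⟩ hadj
      exact (hadj_iff _ _).mp hadj (hsame u hu v hv)
    have hsep' : 2 ≤ componentCount (G.induce T) := hsep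
    set m := Nat.card ↥T with hm
    have hm2 : 2 ≤ m := by rw [hcount] at hsep'; exact hsep'
    obtain ⟨x0, hx0⟩ : T.Nonempty := by
      rw [Set.nonempty_coe_sort.symm]
      rw [hm] at hm2
      exact (Nat.card_pos_iff.mp (by omega)).1
    have hmK : m ≤ K := by
      have hle : m ≤ n x0.1 := by
        rw [hm, ← hpartcard x0.1]
        apply Nat.card_le_card_of_injective
          (fun z : ↥T => (⟨z.1, hsame z.1 z.2 x0 hx0⟩ : {x : Σ j, Fin (n j) // x.1 = x0.1}))
        intro a b hab
        have h2 := congrArg Subtype.val hab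
        exact Subtype.ext h2
      exact hle.trans (hmono (Fin.le_last _))
    have hmN : m = N - S.card := by
      rw [hm, Nat.card_coe_set_eq, hT, ← Finset.coe_compl, Set.ncard_coe_finset,
        Finset.card_compl, hcardV]
    have hSle : S.card ≤ N := by rw [← hcardV]; exact Finset.card_le_univ S
    have hScard : S.card = N - m := by omega
    rw [hScard, hcount]
    calc (N : ℝ≥0∞) / K - 1 = ((N - K : ℕ) : ℝ≥0∞) / K :=
        (ennreal_sub_div N K hKpos.ne' hKN).symm
      _ ≤ ((N - m : ℕ) : ℝ≥0∞) / m :=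
        ENNReal.div_le_div (Nat.cast_le.mpr (by omega)) (Nat.cast_le.mpr hmK)
end

section
/- Let G be a minimally tough graph that is the join G₁ * G₂, where G₁ contains a vertex of maximum degree in G and G₂ is disconnected. Then G is isomorphic to one of K_{1,ℓ}, K_{2,3}, T(2ℓ,ℓ), or T(2ℓ−1,ℓ) for some ℓ ≥ 2. -/
open SimpleGraph
open scoped ENNReal NNReal

set_option linter.unusedSectionVars false
set_option maxHeartbeats 1600000

section CC
variable {W : Type*} [Finite W] {K K' : SimpleGraph W}

instance : Finite K.ConnectedComponent :=
  Finite.of_surjective K.connectedComponentMk (Quot.mk_surjective)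

lemma compCount_le_card : componentCount K ≤ Nat.card W :=
  Nat.card_le_card_of_surjective K.connectedComponentMk Quot.mk_surjective

lemma two_le_compCount_s13 {x y : W} (h : ¬K.Reachable x y) : 2 ≤ componentCount K := by
  have : K.connectedComponentMk x ≠ K.connectedComponentMk y := by
    simpa [SimpleGraph.ConnectedComponent.eq] using h
  exact Finite.one_lt_card_iff_nontrivial.mpr ⟨_, _, this⟩

lemma compCount_le_two {x y : W} (h : ∀ w, K.Reachable w x ∨ K.Reachable w y) :
    componentCount K ≤ 2 := by
  have hs : Function.Surjective (fun b : Bool =>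
      if b then K.connectedComponentMk x else K.connectedComponentMk y) := by
    intro c
    induction c using SimpleGraph.ConnectedComponent.ind with
    | _ w =>
      rcases h w with hw | hw
      · exact ⟨true, by simpa using (SimpleGraph.ConnectedComponent.sound hw).symm⟩
      · exact ⟨false, by simpa using (SimpleGraph.ConnectedComponent.sound hw).symm⟩
  simpa [componentCount] using Nat.card_le_card_of_surjective _ hs

lemma compCount_lt_two_of_connected (h : K.Connected) : componentCount K < 2 := by
  have : Subsingleton K.ConnectedComponent := by
    constructor
    intro a b
    induction a using SimpleGraph.ConnectedComponent.ind with
    | _ x =>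
      induction b using SimpleGraph.ConnectedComponent.ind with
      | _ y => exact SimpleGraph.ConnectedComponent.sound (h.preconnected x y)
  have h1 : componentCount K ≤ 1 := Finite.card_le_one_iff_subsingleton.mpr this
  omega

lemma compCount_eq_card_of_edgeless (h : ∀ x y, ¬K.Adj x y) :
    componentCount K = Nat.card W := by
  have hb : Function.Bijective K.connectedComponentMk := by
    refine ⟨fun x y hxy => ?_, Quot.mk_surjective⟩
    have hr := (SimpleGraph.ConnectedComponent.eq.mp hxy)
    have : K = ⊥ := by ext a b; simp [h a b]
    rw [this] at hr
    exact SimpleGraph.reachable_bot.mp hr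
  exact (Nat.card_eq_of_bijective _ hb).symm

lemma compCount_congr (h : ∀ x y, K.Reachable x y ↔ K'.Reachable x y) :
    componentCount K = componentCount K' :=
  Nat.card_congr (Quot.congrRight h)

lemma connected_of_hub {h0 : W} (h : ∀ x, K.Reachable x h0) : K.Connected := by
  have : Nonempty W := ⟨h0⟩
  exact ⟨fun x y => (h x).trans (h y).symm⟩

lemma not_reachable_of_isolated {x y : W} (hxy : x ≠ y) (h : ∀ w, ¬K.Adj x w) :
    ¬K.Reachable x y := by
  intro ⟨w⟩
  cases w with
  | nil => exact hxy rfl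
  | cons ha _ => exact h _ ha

/-- transfer of reachability when deleting an edge whose endpoints stay reachable -/
lemma reach_transfer (hle : K' ≤ K) {u v : W}
    (hcov : ∀ x y, K.Adj x y → K'.Adj x y ∨ (x = u ∧ y = v) ∨ (x = v ∧ y = u))
    (huv : K'.Reachable u v) : ∀ x y, K.Reachable x y ↔ K'.Reachable x y := by
  intro x y
  constructor
  · intro ⟨w⟩
    induction w with
    | nil => exact SimpleGraph.Reachable.refl _
    | cons ha p ih =>
      refine SimpleGraph.Reachable.trans ?_ ih
      rcases hcov _ _ ha with h | ⟨rfl, rfl⟩ | ⟨rfl, rfl⟩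
      · exact h.reachable
      · exact huv
      · exact huv.symm
  · exact fun h => h.mono hle

end CC

section Tough
variable {V : Type*} [Fintype V] [DecidableEq V]

lemma toughness_le {G : SimpleGraph V} {S : Finset V} (hS : G.IsSeparator S) :
    G.toughness ≤ (S.card : ℝ≥0∞) / (componentCount (G.induce ((↑S : Set V)ᶜ)) : ℝ≥0∞) :=
  iInf₂_le S hS

lemma exists_witness {G : SimpleGraph V} {x : ℝ≥0∞} (h : G.toughness < x) :
    ∃ S : Finset V, G.IsSeparator S ∧
      (S.card : ℝ≥0∞) / (componentCount (G.induce ((↑S : Set V)ᶜ)) : ℝ≥0∞) < x := by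
  have := iInf_lt_iff.mp h
  obtain ⟨S, hS⟩ := this
  obtain ⟨h1, h2⟩ := iInf_lt_iff.mp hS
  exact ⟨S, h1, h2⟩

lemma nat_div_lt_div {a b c d : ℕ} (hc : c ≠ 0) (hd : d ≠ 0)
    (h : (a : ℝ≥0∞) / (c : ℝ≥0∞) < (b : ℝ≥0∞) / (d : ℝ≥0∞)) : a * d < b * c := by
  have hcc : (c : ℝ≥0∞) ≠ 0 := by exact_mod_cast hc
  have hdd : (d : ℝ≥0∞) ≠ 0 := by exact_mod_cast hd
  have hct : (c : ℝ≥0∞) ≠ ⊤ := ENNReal.natCast_ne_top c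
  have hdt : (d : ℝ≥0∞) ≠ ⊤ := ENNReal.natCast_ne_top d
  have h2 : (a : ℝ≥0∞) / c * (c * d) < (b : ℝ≥0∞) / d * (c * d) := by
    refine ENNReal.mul_lt_mul_left ?_ ?_ h
    · exact mul_ne_zero hcc hdd
    · exact ENNReal.mul_ne_top hct hdt
  have e1 : (a : ℝ≥0∞) / c * (c * d) = (a : ℝ≥0∞) * d := by
    rw [← mul_assoc, ENNReal.div_mul_cancel hcc hct]
  have e2 : (b : ℝ≥0∞) / d * (c * d) = (b : ℝ≥0∞) * c := by
    rw [mul_comm (c : ℝ≥0∞) d, ← mul_assoc, ENNReal.div_mul_cancel hdd hdt]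
  rw [e1, e2] at h2
  exact_mod_cast h2

end Tough

section Bip
variable {V : Type*} [Fintype V] [DecidableEq V]

lemma iso_completeBipartite (G : SimpleGraph V) (A B : Finset V)
    (hdisj : Disjoint A B) (hcover : A ∪ B = Finset.univ)
    (hjoin : ∀ a ∈ A, ∀ b ∈ B, G.Adj a b)
    (hA : ∀ x ∈ A, ∀ y ∈ A, ¬G.Adj x y) (hB : ∀ x ∈ B, ∀ y ∈ B, ¬G.Adj x y) :
    Nonempty (G ≃g completeBipartiteGraph (Fin A.card) (Fin B.card)) := by
  classical
  have hmem : ∀ v : V, v ∉ A → v ∈ B := fun v hv => by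
    have hu := Finset.mem_univ v
    rw [← hcover, Finset.mem_union] at hu
    tauto
  have hnAB : ∀ v : V, v ∈ A → v ∉ B := fun v hv =>
    Finset.disjoint_left.mp hdisj hv
  set toSum : V → (↥A ⊕ ↥B) := fun v =>
    if h : v ∈ A then Sum.inl ⟨v, h⟩ else Sum.inr ⟨v, hmem v h⟩ with htoSum
  have hbij : Function.Bijective toSum := by
    constructor
    · intro x y hxy
      by_cases hx : x ∈ A <;> by_cases hy : y ∈ A <;>
        simp only [htoSum, dif_pos, dif_neg, hx, hy] at hxy <;>
        first
          | exact congrArg Subtype.val (Sum.inl.inj hxy)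
          | exact congrArg Subtype.val (Sum.inr.inj hxy)
          | cases hxy
    · rintro (⟨a, ha⟩ | ⟨b, hb⟩)
      · exact ⟨a, by simp [htoSum, ha]⟩
      · refine ⟨b, ?_⟩
        have hbA : b ∉ A := fun h => (hnAB b h) hb
        simp [htoSum, dif_neg hbA]
  let E : V ≃ (Fin A.card ⊕ Fin B.card) :=
    (Equiv.ofBijective toSum hbij).trans (Equiv.sumCongr A.equivFin B.equivFin)
  refine ⟨{ toEquiv := E, map_rel_iff' := ?_ }⟩
  intro x y
  show (completeBipartiteGraph (Fin A.card) (Fin B.card)).Adj (E x) (E y) ↔ G.Adj x y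
  by_cases hx : x ∈ A <;> by_cases hy : y ∈ A
  · simp only [E, Equiv.trans_apply, Equiv.ofBijective_apply, htoSum, dif_pos hx, dif_pos hy,
      Equiv.sumCongr_apply, Sum.map_inl, completeBipartiteGraph_adj]
    simp [hA x hx y hy]
  · simp only [E, Equiv.trans_apply, Equiv.ofBijective_apply, htoSum, dif_pos hx, dif_neg hy,
      Equiv.sumCongr_apply, Sum.map_inl, Sum.map_inr, completeBipartiteGraph_adj]
    simp [hjoin x hx y (hmem y hy)]
  · simp only [E, Equiv.trans_apply, Equiv.ofBijective_apply, htoSum, dif_neg hx, dif_pos hy,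
      Equiv.sumCongr_apply, Sum.map_inl, Sum.map_inr, completeBipartiteGraph_adj]
    simp [(hjoin y hy x (hmem x hx)).symm]
  · simp only [E, Equiv.trans_apply, Equiv.ofBijective_apply, htoSum, dif_neg hx, dif_neg hy,
      Equiv.sumCongr_apply, Sum.map_inr, completeBipartiteGraph_adj]
    simp [hB x (hmem x hx) y (hmem y hy)]

end Bip

section Turan
variable {V : Type*} [Fintype V] [DecidableEq V]

lemma iso_turan (G : SimpleGraph V)
    (huniq : ∀ x y z : V, y ≠ x → z ≠ x → ¬G.Adj x y → ¬G.Adj x z → y = z)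
    (hq : ∀ u v : V, (∀ y, y ≠ u → G.Adj u y) → (∀ y, y ≠ v → G.Adj v y) → u = v)
    (hn : 4 ≤ Fintype.card V) :
    (∃ ℓ, 2 ≤ ℓ ∧ Nonempty (G ≃g SimpleGraph.turanGraph (2 * ℓ) ℓ)) ∨
    (∃ ℓ, 2 ≤ ℓ ∧ Nonempty (G ≃g SimpleGraph.turanGraph (2 * ℓ - 1) ℓ)) := by
  classical
  set n := Fintype.card V with hn'
  set σ : V ≃ Fin n := Fintype.equivFin V with hσ
  set paired : V → Prop := fun v => ∃ w, w ≠ v ∧ ¬G.Adj v w with hpaired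
  set ι : V → V := fun v => if h : paired v then h.choose else v with hι
  -- basic properties of ι
  have hι1 : ∀ v, paired v → ι v ≠ v ∧ ¬G.Adj v (ι v) := by
    intro v hv
    have := hv.choose_spec
    simp only [hι, dif_pos hv]
    exact this
  have hpsymm : ∀ v w, w ≠ v → ¬G.Adj v w → paired w := by
    intro v w hne hnadj
    exact ⟨v, hne.symm, fun h => hnadj h.symm⟩
  have huniq' : ∀ v w, paired v → w ≠ v → ¬G.Adj v w → w = ι v := by
    intro v w hv hne hnadj
    exact huniq v w (ι v) hne (hι1 v hv).1 hnadj (hι1 v hv).2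
  have hpair_of : ∀ v w, w ≠ v → ¬G.Adj v w → paired v := by
    intro v w hne hnadj; exact ⟨w, hne, hnadj⟩
  have hιpaired : ∀ v, paired v → paired (ι v) := by
    intro v hv
    obtain ⟨hne, hnadj⟩ := hι1 v hv
    exact ⟨v, hne.symm, fun h => hnadj h.symm⟩
  have hιinv : ∀ v, paired v → ι (ι v) = v := by
    intro v hv
    obtain ⟨hne, hnadj⟩ := hι1 v hv
    have h2 : paired (ι v) := hιpaired v hv
    have := huniq' (ι v) v h2 (fun h => hne h.symm) (fun h => hnadj h.symm)
    exact this.symm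
  -- the finsets
  set R : Finset V := Finset.univ.filter (fun v => paired v ∧ (σ v : ℕ) < (σ (ι v) : ℕ)) with hR
  set U : Finset V := Finset.univ.filter (fun v => ¬ paired v) with hU
  set R' : Finset V := R.image ι with hR'
  have hmemR : ∀ v, v ∈ R ↔ paired v ∧ (σ v : ℕ) < (σ (ι v) : ℕ) := by
    intro v; simp [hR]
  have hmemU : ∀ v, v ∈ U ↔ ¬ paired v := by intro v; simp [hU]
  have hσne : ∀ v, paired v → (σ v : ℕ) ≠ (σ (ι v) : ℕ) := by
    intro v hv h
    exact (hι1 v hv).1 (σ.injective (Fin.val_injective h)).symm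
  have hmem3 : ∀ v, v ∉ R → v ∉ U → (paired v ∧ ι v ∈ R) := by
    intro v h1 h2
    have hp : paired v := by rwa [hmemU, not_not] at h2
    refine ⟨hp, ?_⟩
    rw [hmemR] at h1 ⊢
    have hlt : (σ (ι v) : ℕ) < (σ v : ℕ) := by
      rcases lt_or_ge (σ v : ℕ) (σ (ι v) : ℕ) with h | h
      · exact absurd ⟨hp, h⟩ h1
      · exact lt_of_le_of_ne h (fun hh => hσne v hp hh.symm)
    refine ⟨hιpaired v hp, ?_⟩
    rwa [hιinv v hp]
  -- partition
  have hdisjRU : Disjoint R U := by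
    rw [Finset.disjoint_left]
    intro v hv hv2
    rw [hmemR] at hv; rw [hmemU] at hv2
    exact hv2 hv.1
  have hιinjR : Set.InjOn ι R := by
    intro a ha b hb hab
    rw [Finset.mem_coe, hmemR] at ha hb
    have := congrArg ι hab
    rwa [hιinv a ha.1, hιinv b hb.1] at this
  have hcardR' : R'.card = R.card := Finset.card_image_of_injOn hιinjR
  have hdisjR'RU : Disjoint (R ∪ U) R' := by
    rw [Finset.disjoint_right]
    intro w hw
    rw [hR', Finset.mem_image] at hw
    obtain ⟨r, hr, hrw⟩ := hw
    rw [hmemR] at hr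
    have hwp : paired w := hrw ▸ hιpaired r hr.1
    have hwR : w ∉ R := by
      rw [hmemR]
      rintro ⟨-, hlt⟩
      have : ι w = r := by rw [← hrw, hιinv r hr.1]
      rw [this, ← hrw] at hlt
      omega
    have hwU : w ∉ U := by rw [hmemU, not_not]; exact hwp
    simp [Finset.mem_union, hwR, hwU]
  have hcover : R ∪ U ∪ R' = Finset.univ := by
    apply Finset.eq_univ_of_forall
    intro v
    by_cases h1 : v ∈ R
    · simp [Finset.mem_union, h1]
    by_cases h2 : v ∈ U
    · simp [Finset.mem_union, h2]
    have h3 := hmem3 v h1 h2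
    have : v ∈ R' := by
      rw [hR', Finset.mem_image]
      exact ⟨ι v, h3.2, hιinv v h3.1⟩
    simp [Finset.mem_union, this]
  have hcount : n = 2 * R.card + U.card := by
    have h1 : (R ∪ U ∪ R').card = n := by rw [hcover]; simp [hn']
    rw [Finset.card_union_of_disjoint hdisjR'RU, Finset.card_union_of_disjoint hdisjRU,
      hcardR'] at h1
    omega
  have hcardU : U.card ≤ 1 := by
    rw [Finset.card_le_one]
    intro a ha b hb
    rw [hmemU] at ha hb
    have ha' : ∀ y, y ≠ a → G.Adj a y := by
      intro y hy
      by_contra hadj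
      exact ha ⟨y, hy, hadj⟩
    have hb' : ∀ y, y ≠ b → G.Adj b y := by
      intro y hy
      by_contra hadj
      exact hb ⟨y, hy, hadj⟩
    exact hq a b ha' hb'
  have hR2 : 2 ≤ R.card := by omega
  set ℓ : ℕ := R.card + U.card with hℓ
  have hℓpos : 0 < ℓ := by omega
  have hRℓ : R.card ≤ ℓ := by omega
  have hℓn : ℓ + R.card = n := by omega
  -- the index map
  set eR : ↥R ≃ Fin R.card := R.equivFin with heR
  set eU : ↥U ≃ Fin U.card := U.equivFin with heU
  set idx : V → ℕ := fun v =>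
    if hR : v ∈ R then (eR ⟨v, hR⟩ : ℕ)
    else if hU : v ∈ U then R.card + (eU ⟨v, hU⟩ : ℕ)
    else ℓ + (eR ⟨ι v, (hmem3 v hR hU).2⟩ : ℕ) with hidx
  have hbound : ∀ v, idx v < n := by
    intro v
    rw [hidx]
    dsimp only
    split
    · have := (eR ⟨v, by assumption⟩).isLt; omega
    · split
      · have := (eU ⟨v, by assumption⟩).isLt; omega
      · next h1 h2 =>
          have := (eR ⟨ι v, (hmem3 v h1 h2).2⟩).isLt
          omega
  -- the class map
  set cls : V → ℕ := fun v =>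
    if hR : v ∈ R then (eR ⟨v, hR⟩ : ℕ)
    else if hU : v ∈ U then R.card + (eU ⟨v, hU⟩ : ℕ)
    else (eR ⟨ι v, (hmem3 v hR hU).2⟩ : ℕ) with hcls
  have hmodeq : ∀ v, idx v % ℓ = cls v := by
    intro v
    rw [hidx, hcls]
    dsimp only
    split
    · exact Nat.mod_eq_of_lt (by have := (eR ⟨v, by assumption⟩).isLt; omega)
    · split
      · exact Nat.mod_eq_of_lt (by have := (eU ⟨v, by assumption⟩).isLt; omega)
      · next h1 h2 =>
          rw [Nat.add_mod_left]
          exact Nat.mod_eq_of_lt (by have := (eR ⟨ι v, (hmem3 v h1 h2).2⟩).isLt; omega)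
  -- class characterization
  have hclsR : ∀ v (h : v ∈ R), cls v = (eR ⟨v, h⟩ : ℕ) := by
    intro v h; rw [hcls]; simp [h]
  have hclsU : ∀ v (h : v ∈ U), cls v = R.card + (eU ⟨v, h⟩ : ℕ) := by
    intro v h
    have hvR : v ∉ R := Finset.disjoint_right.mp hdisjRU h
    rw [hcls]; simp [h, hvR]
  have hclsP : ∀ v (h1 : v ∉ R) (h2 : v ∉ U), cls v = (eR ⟨ι v, (hmem3 v h1 h2).2⟩ : ℕ) := by
    intro v h1 h2; rw [hcls]; simp [h1, h2]
  have hclsRlt : ∀ v, v ∈ R ∨ (v ∉ R ∧ v ∉ U) → cls v < R.card := by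
    intro v hv
    rcases hv with h | ⟨h1, h2⟩
    · rw [hclsR v h]; exact (eR ⟨v, h⟩).isLt
    · rw [hclsP v h1 h2]; exact (eR _).isLt
  have hclsUge : ∀ v (h : v ∈ U), R.card ≤ cls v := by
    intro v h; rw [hclsU v h]; omega
  -- partner basics
  have hpartner : ∀ x y : V, x ≠ y → ¬G.Adj x y → ι x = y ∧ ι y = x ∧ paired x ∧ paired y := by
    intro x y hne hnadj
    have hpx : paired x := ⟨y, hne.symm, hnadj⟩
    have hpy : paired y := ⟨x, hne, fun h => hnadj h.symm⟩
    have h1 : y = ι x := huniq' x y hpx hne.symm hnadj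
    have h2 : x = ι y := huniq' y x hpy hne (fun h => hnadj h.symm)
    exact ⟨h1.symm, h2.symm, hpx, hpy⟩
  -- idx ranges
  have hidxR : ∀ v, v ∈ R → idx v < R.card := by
    intro v h; rw [hidx]; simp only [dif_pos h]; exact (eR ⟨v, h⟩).isLt
  have hidxU : ∀ v, v ∈ U → R.card ≤ idx v ∧ idx v < ℓ := by
    intro v h
    have hvR : v ∉ R := Finset.disjoint_right.mp hdisjRU h
    rw [hidx]; simp only [dif_neg hvR, dif_pos h]
    have := (eU ⟨v, h⟩).isLt
    omega
  have hidxP : ∀ v (h1 : v ∉ R) (h2 : v ∉ U), ℓ ≤ idx v := by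
    intro v h1 h2; rw [hidx]; simp only [dif_neg h1, dif_neg h2]; omega
  -- cls classification
  have hcls_inj : ∀ x y : V, cls x = cls y → x = y ∨ (ι x = y ∧ paired x) := by
    intro x y hxy
    by_cases hxR : x ∈ R <;> by_cases hyR : y ∈ R
    · left
      rw [hclsR x hxR, hclsR y hyR] at hxy
      have := eR.injective (Fin.val_injective hxy)
      exact congrArg Subtype.val this
    · by_cases hyU : y ∈ U
      · exfalso
        have h1 := hclsRlt x (Or.inl hxR)
        have h2 := hclsUge y hyU
        omega
      · right
        rw [hclsR x hxR, hclsP y hyR hyU] at hxy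
        have hxy' : x = ι y := congrArg Subtype.val (eR.injective (Fin.val_injective hxy))
        have hpy : paired y := (hmem3 y hyR hyU).1
        constructor
        · rw [hxy', hιinv y hpy]
        · rw [hxy']; exact hιpaired y hpy
    · by_cases hxU : x ∈ U
      · exfalso
        have h1 := hclsRlt y (Or.inl hyR)
        have h2 := hclsUge x hxU
        omega
      · right
        rw [hclsP x hxR hxU, hclsR y hyR] at hxy
        have hxy' : ι x = y := congrArg Subtype.val (eR.injective (Fin.val_injective hxy))
        exact ⟨hxy', (hmem3 x hxR hxU).1⟩
    · by_cases hxU : x ∈ U <;> by_cases hyU : y ∈ U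
      · left
        rw [hclsU x hxU, hclsU y hyU] at hxy
        have hxy' : (eU ⟨x, hxU⟩ : ℕ) = (eU ⟨y, hyU⟩ : ℕ) := by omega
        exact congrArg Subtype.val (eU.injective (Fin.val_injective hxy'))
      · exfalso
        have h1 := hclsUge x hxU
        have h2 := hclsRlt y (Or.inr ⟨hyR, hyU⟩)
        omega
      · exfalso
        have h1 := hclsUge y hyU
        have h2 := hclsRlt x (Or.inr ⟨hxR, hxU⟩)
        omega
      · left
        rw [hclsP x hxR hxU, hclsP y hyR hyU] at hxy
        have hxy' : ι x = ι y := congrArg Subtype.val (eR.injective (Fin.val_injective hxy))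
        have hpx := (hmem3 x hxR hxU).1
        have hpy := (hmem3 y hyR hyU).1
        have := congrArg ι hxy'
        rwa [hιinv x hpx, hιinv y hpy] at this
  have hcls_partner : ∀ x y : V, x ≠ y → ¬G.Adj x y → cls x = cls y := by
    intro x y hne hnadj
    obtain ⟨hxy, hyx, hpx, hpy⟩ := hpartner x y hne hnadj
    by_cases hxR : x ∈ R
    · have hyR : y ∉ R := by
        rw [hmemR] at hxR ⊢
        rintro ⟨-, hlt⟩
        rw [hxy] at hxR
        rw [hyx] at hlt
        omega
      have hyU : y ∉ U := by rw [hmemU, not_not]; exact hpy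
      rw [hclsR x hxR, hclsP y hyR hyU]
      exact congrArg (fun z : ↥R => ((eR z : Fin R.card) : ℕ))
        (Subtype.ext (show x = ι y from hyx.symm))
    · have hxU : x ∉ U := by rw [hmemU, not_not]; exact hpx
      have hyR : y ∈ R := by
        have := (hmem3 x hxR hxU).2
        rwa [hxy] at this
      rw [hclsP x hxR hxU, hclsR y hyR]
      exact congrArg (fun z : ↥R => ((eR z : Fin R.card) : ℕ))
        (Subtype.ext (show ι x = y from hxy))
  have hAdjIff : ∀ x y : V, G.Adj x y ↔ cls x ≠ cls y := by
    intro x y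
    constructor
    · intro h hc
      rcases hcls_inj x y hc with rfl | ⟨hxy, hpx⟩
      · exact G.loopless.irrefl x h
      · exact (hι1 x hpx).2 (hxy ▸ h)
    · intro h
      by_contra hnadj
      have hne : x ≠ y := fun hh => h (hh ▸ rfl)
      exact h (hcls_partner x y hne hnadj)
  -- the bijection
  set f : V → Fin n := fun v => ⟨idx v, hbound v⟩ with hf
  have hinj : Function.Injective f := by
    intro x y hxy
    have hidxeq : idx x = idx y := congrArg Fin.val hxy
    have hclseq : cls x = cls y := by
      rw [← hmodeq, ← hmodeq, hidxeq]
    rcases hcls_inj x y hclseq with rfl | ⟨hxy', hpx⟩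
    · rfl
    · exfalso
      have hxU : x ∉ U := by rw [hmemU, not_not]; exact hpx
      by_cases hxR : x ∈ R
      · have h1 := hidxR x hxR
        have hyR : y ∉ R := by
          rw [hmemR] at hxR ⊢
          rintro ⟨-, hlt⟩
          have hyx : ι y = x := by rw [← hxy', hιinv x hpx]
          rw [hxy'] at hxR
          rw [hyx] at hlt
          omega
        have hyU : y ∉ U := by
          rw [hmemU, not_not]
          rw [← hxy']
          exact hιpaired x hpx
        have h2 := hidxP y hyR hyU
        omega
      · have h1 := hidxP x hxR hxU
        have hyR : y ∈ R := by
          have := (hmem3 x hxR hxU).2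
          rwa [hxy'] at this
        have h2 := hidxR y hyR
        omega
  have hbij : Function.Bijective f := by
    rw [Fintype.bijective_iff_injective_and_card]
    exact ⟨hinj, by simp [hn']⟩
  set E : V ≃ Fin n := Equiv.ofBijective f hbij with hE
  have hiso : Nonempty (G ≃g SimpleGraph.turanGraph n ℓ) := by
    refine ⟨{ toEquiv := E, map_rel_iff' := ?_ }⟩
    intro x y
    have hEx : ((E x : Fin n) : ℕ) = idx x := rfl
    have hEy : ((E y : Fin n) : ℕ) = idx y := rfl
    show (turanGraph n ℓ).Adj (E x) (E y) ↔ G.Adj x y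
    have hadj : (turanGraph n ℓ).Adj (E x) (E y) ↔
        ((E x : Fin n) : ℕ) % ℓ ≠ ((E y : Fin n) : ℕ) % ℓ := by
      constructor
      · intro h hc; exact h (by omega)
      · intro h hc; exact h (by omega)
    rw [hadj, hEx, hEy, hmodeq, hmodeq, ← hAdjIff]
  -- conclude
  rcases Nat.le_one_iff_eq_zero_or_eq_one.mp hcardU with hU0 | hU1
  · left
    refine ⟨ℓ, by omega, ?_⟩
    have hn2 : 2 * ℓ = n := by omega
    rw [hn2]
    exact hiso
  · right
    refine ⟨ℓ, by omega, ?_⟩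
    have hn2 : 2 * ℓ - 1 = n := by omega
    rw [hn2]
    exact hiso

end Turan

section H
variable {V : Type*} [Fintype V] [DecidableEq V]

lemma induce_adj_iff {K : SimpleGraph V} {s : Set V} {a b : ↥s} :
    (K.induce s).Adj a b ↔ K.Adj ↑a ↑b := Iff.rfl

lemma toughness_le' {G : SimpleGraph V} {S : Finset V} (hS : G.IsSeparator S) :
    G.toughness ≤ (S.card : ℝ≥0∞) / (componentCount (G.induce ((↑S : Set V)ᶜ)) : ℝ≥0∞) :=
  iInf₂_le S hS

lemma mem_compl_coe {S : Finset V} {v : V} : v ∈ ((↑S : Set V)ᶜ) ↔ v ∉ S := by simp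

lemma witness_endpoints (G : SimpleGraph V) {u v : V} (S : Finset V)
    (hSsep : (G.deleteEdges {s(u,v)}).IsSeparator S)
    (hlt : (S.card : ℝ≥0∞) /
        (componentCount ((G.deleteEdges {s(u,v)}).induce ((↑S : Set V)ᶜ)) : ℝ≥0∞)
      < G.toughness) : u ∉ S ∧ v ∉ S := by
  by_contra hcon
  have hmem : u ∈ S ∨ v ∈ S := by tauto
  have heq : (G.deleteEdges {s(u,v)}).induce ((↑S : Set V)ᶜ) = G.induce ((↑S : Set V)ᶜ) := by
    ext x y
    rw [induce_adj_iff, induce_adj_iff, SimpleGraph.deleteEdges_adj]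
    constructor
    · exact fun h => h.1
    · intro h
      refine ⟨h, ?_⟩
      intro hxy
      rw [Set.mem_singleton_iff, Sym2.eq_iff] at hxy
      have hx := x.2
      have hy := y.2
      rw [mem_compl_coe] at hx hy
      rcases hxy with ⟨hx', hy'⟩ | ⟨hx', hy'⟩ <;> rcases hmem with h1 | h1
      · exact hx (hx' ▸ h1)
      · exact hy (hy' ▸ h1)
      · exact hy (hy' ▸ h1)
      · exact hx (hx' ▸ h1)
  have hSsep' : G.IsSeparator S := by
    rw [SimpleGraph.IsSeparator, ← heq]; exact hSsep
  rw [heq] at hlt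
  exact absurd (toughness_le' hSsep') (not_le.mpr hlt)

end H



section JW
variable {V : Type*} [Fintype V] [DecidableEq V]

lemma join_witness (G : SimpleGraph V) (A B : Finset V)
    (hdisj : Disjoint A B) (hcover : A ∪ B = Finset.univ)
    (hjoin : ∀ a ∈ A, ∀ b ∈ B, G.Adj a b)
    {a b : V} (ha : a ∈ A) (hb : b ∈ B) (S : Finset V)
    (hSsep : (G.deleteEdges {s(a,b)}).IsSeparator S)
    (hlt : (S.card : ℝ≥0∞) /
        (componentCount ((G.deleteEdges {s(a,b)}).induce ((↑S : Set V)ᶜ)) : ℝ≥0∞)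
      < G.toughness) :
    (A.erase a ⊆ S ∧ (∀ u' ∈ B, G.Adj b u' → u' ∈ S) ∧
      componentCount ((G.deleteEdges {s(a,b)}).induce ((↑S : Set V)ᶜ)) ≤ 2) ∨
    (B.erase b ⊆ S ∧ (∀ a' ∈ A, G.Adj a a' → a' ∈ S) ∧
      componentCount ((G.deleteEdges {s(a,b)}).induce ((↑S : Set V)ᶜ)) ≤ 2) := by
  classical
  obtain ⟨haS, hbS⟩ := witness_endpoints G S hSsep hlt
  have hmemA : ∀ v, v ∉ A → v ∈ B := fun v hv => by
    have hu := Finset.mem_univ v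
    rw [← hcover, Finset.mem_union] at hu
    tauto
  have hAB : ∀ v ∈ A, v ∉ B := fun v hv => Finset.disjoint_left.mp hdisj hv
  have hab_ne : a ≠ b := fun h => hAB a ha (h ▸ hb)
  set K := (G.deleteEdges {s(a,b)}).induce ((↑S : Set V)ᶜ) with hK
  have hsep2 : 2 ≤ componentCount K := hSsep
  have hKadj : ∀ {x y : V} (hx : x ∉ S) (hy : y ∉ S), G.Adj x y →
      ¬((x = a ∧ y = b) ∨ (x = b ∧ y = a)) →
      K.Adj ⟨x, mem_compl_coe.mpr hx⟩ ⟨y, mem_compl_coe.mpr hy⟩ := by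
    intro x y hx hy hadj hne
    show (G.deleteEdges {s(a,b)}).Adj x y
    rw [SimpleGraph.deleteEdges_adj]
    refine ⟨hadj, fun h => hne ?_⟩
    rw [Set.mem_singleton_iff, Sym2.eq_iff] at h
    exact h
  have hrefl : ∀ {x y : V} (hx : x ∉ S) (hy : y ∉ S), x = y →
      K.Reachable ⟨x, mem_compl_coe.mpr hx⟩ ⟨y, mem_compl_coe.mpr hy⟩ := by
    intro x y hx hy hxy
    subst hxy
    exact SimpleGraph.Reachable.refl _
  by_cases hA2 : ∃ a' ∈ A, a' ≠ a ∧ a' ∉ S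
  · obtain ⟨a', ha'A, ha'ne, ha'S⟩ := hA2
    have ha'B : a' ∉ B := hAB a' ha'A
    by_cases hB2 : ∃ b' ∈ B, b' ≠ b ∧ b' ∉ S
    · exfalso
      obtain ⟨b', hb'B, hb'ne, hb'S⟩ := hB2
      have hb'A : b' ∉ B → False := fun h => h hb'B
      have hconn : K.Connected := by
        apply connected_of_hub (h0 := (⟨a', mem_compl_coe.mpr ha'S⟩ : ↥((↑S : Set V)ᶜ)))
        rintro ⟨x, hx⟩
        have hxS : x ∉ S := mem_compl_coe.mp hx
        by_cases hxA : x ∈ A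
        · have hxB : x ∉ B := hAB x hxA
          have h1 : K.Adj ⟨x, mem_compl_coe.mpr hxS⟩ ⟨b', mem_compl_coe.mpr hb'S⟩ :=
            hKadj hxS hb'S (hjoin x hxA b' hb'B)
              (by rintro (⟨-, h⟩ | ⟨h, -⟩); exact hb'ne h; exact hxB (h ▸ hb))
          have h2 : K.Adj ⟨b', mem_compl_coe.mpr hb'S⟩ ⟨a', mem_compl_coe.mpr ha'S⟩ :=
            hKadj hb'S ha'S (hjoin a' ha'A b' hb'B).symm
              (by rintro (⟨h, -⟩ | ⟨-, h⟩); exact (hAB a ha) (h ▸ hb'B); exact ha'ne h)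
          exact h1.reachable.trans h2.reachable
        · have hxB : x ∈ B := hmemA x hxA
          have h1 : K.Adj ⟨x, mem_compl_coe.mpr hxS⟩ ⟨a', mem_compl_coe.mpr ha'S⟩ :=
            hKadj hxS ha'S (hjoin a' ha'A x hxB).symm
              (by rintro (⟨h, -⟩ | ⟨-, h⟩); exact (hAB a ha) (h ▸ hxB); exact ha'ne h)
          exact h1.reachable
      have := compCount_lt_two_of_connected hconn
      omega
    · -- right branch
      right
      push_neg at hB2
      have hBsub : B.erase b ⊆ S := by
        intro x hx
        rw [Finset.mem_erase] at hx
        by_contra hxS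
        exact hxS (hB2 x hx.2 hx.1)
      have hreachB : ∀ (x : V) (hxS : x ∉ S), x ∈ B → x = b := by
        intro x hxS hxB
        by_contra hxb
        exact hxS (hB2 x hxB hxb)
      have hNA : ∀ a'' ∈ A, G.Adj a a'' → a'' ∈ S := by
        intro a'' ha''A hadj
        by_contra ha''S
        have ha''ne : a'' ≠ a := fun h => G.loopless.irrefl a (h ▸ hadj)
        have ha''B : a'' ∉ B := hAB a'' ha''A
        have hconn : K.Connected := by
          apply connected_of_hub (h0 := (⟨b, mem_compl_coe.mpr hbS⟩ : ↥((↑S : Set V)ᶜ)))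
          rintro ⟨x, hx⟩
          have hxS : x ∉ S := mem_compl_coe.mp hx
          by_cases hxB : x ∈ B
          · exact hrefl hxS hbS (hreachB x hxS hxB)
          · have hxA : x ∈ A := by
              by_contra h
              exact hxB (hmemA x h)
            by_cases hxa : x = a
            · have h1 : K.Adj ⟨x, mem_compl_coe.mpr hxS⟩ ⟨a'', mem_compl_coe.mpr ha''S⟩ :=
                hKadj hxS ha''S (by rw [hxa]; exact hadj)
                  (by rintro (⟨-, h⟩ | ⟨h, -⟩); exact ha''B (h ▸ hb); exact (hAB x hxA) (h ▸ hb))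
              have h2 : K.Adj ⟨a'', mem_compl_coe.mpr ha''S⟩ ⟨b, mem_compl_coe.mpr hbS⟩ :=
                hKadj ha''S hbS (hjoin a'' ha''A b hb)
                  (by rintro (⟨h, -⟩ | ⟨h, -⟩); exact ha''ne h; exact ha''B (h ▸ hb))
              exact h1.reachable.trans h2.reachable
            · have h1 : K.Adj ⟨x, mem_compl_coe.mpr hxS⟩ ⟨b, mem_compl_coe.mpr hbS⟩ :=
                hKadj hxS hbS (hjoin x hxA b hb)
                  (by rintro (⟨h, -⟩ | ⟨h, -⟩); exact hxa h; exact (hAB x hxA) (h ▸ hb))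
              exact h1.reachable
        have := compCount_lt_two_of_connected hconn
        omega
      refine ⟨hBsub, hNA, ?_⟩
      apply compCount_le_two (x := (⟨a, mem_compl_coe.mpr haS⟩ : ↥((↑S : Set V)ᶜ)))
        (y := (⟨b, mem_compl_coe.mpr hbS⟩ : ↥((↑S : Set V)ᶜ)))
      rintro ⟨x, hx⟩
      have hxS : x ∉ S := mem_compl_coe.mp hx
      by_cases hxB : x ∈ B
      · exact Or.inr (hrefl hxS hbS (hreachB x hxS hxB))
      · have hxA : x ∈ A := by
          by_contra h
          exact hxB (hmemA x h)
        by_cases hxa : x = a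
        · exact Or.inl (hrefl hxS haS hxa)
        · refine Or.inr ?_
          have h1 : K.Adj ⟨x, mem_compl_coe.mpr hxS⟩ ⟨b, mem_compl_coe.mpr hbS⟩ :=
            hKadj hxS hbS (hjoin x hxA b hb)
              (by rintro (⟨h, -⟩ | ⟨h, -⟩); exact hxa h; exact (hAB x hxA) (h ▸ hb))
          exact h1.reachable
  · -- left branch
    left
    push_neg at hA2
    have hAsub : A.erase a ⊆ S := by
      intro x hx
      rw [Finset.mem_erase] at hx
      by_contra hxS
      exact hxS (hA2 x hx.2 hx.1)
    have hreachA : ∀ (x : V) (hxS : x ∉ S), x ∈ A → x = a := by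
      intro x hxS hxA
      by_contra hxa
      exact hxS (hA2 x hxA hxa)
    have hNB : ∀ u' ∈ B, G.Adj b u' → u' ∈ S := by
      intro u' hu'B hadj
      by_contra hu'S
      have hu'ne : u' ≠ b := fun h => G.loopless.irrefl b (h ▸ hadj)
      have hu'A : u' ∉ A := fun h => (hAB u' h) hu'B
      have hconn : K.Connected := by
        apply connected_of_hub (h0 := (⟨a, mem_compl_coe.mpr haS⟩ : ↥((↑S : Set V)ᶜ)))
        rintro ⟨x, hx⟩
        have hxS : x ∉ S := mem_compl_coe.mp hx
        by_cases hxA : x ∈ A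
        · exact hrefl hxS haS (hreachA x hxS hxA)
        · have hxB : x ∈ B := hmemA x hxA
          by_cases hxb : x = b
          · have h1 : K.Adj ⟨x, mem_compl_coe.mpr hxS⟩ ⟨u', mem_compl_coe.mpr hu'S⟩ :=
              hKadj hxS hu'S (by rw [hxb]; exact hadj)
                (by rintro (⟨h, -⟩ | ⟨-, h⟩); exact (hAB a ha) (h ▸ hxB); exact hu'A (h ▸ ha))
            have h2 : K.Adj ⟨u', mem_compl_coe.mpr hu'S⟩ ⟨a, mem_compl_coe.mpr haS⟩ :=
              hKadj hu'S haS (hjoin a ha u' hu'B).symm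
                (by rintro (⟨-, h⟩ | ⟨h, -⟩); exact hab_ne h; exact hu'ne h)
            exact h1.reachable.trans h2.reachable
          · have h1 : K.Adj ⟨x, mem_compl_coe.mpr hxS⟩ ⟨a, mem_compl_coe.mpr haS⟩ :=
              hKadj hxS haS (hjoin a ha x hxB).symm
                (by rintro (⟨h, -⟩ | ⟨h, -⟩); exact (hAB a ha) (h ▸ hxB); exact hxb h)
            exact h1.reachable
      have := compCount_lt_two_of_connected hconn
      omega
    refine ⟨hAsub, hNB, ?_⟩
    apply compCount_le_two (x := (⟨a, mem_compl_coe.mpr haS⟩ : ↥((↑S : Set V)ᶜ)))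
      (y := (⟨b, mem_compl_coe.mpr hbS⟩ : ↥((↑S : Set V)ᶜ)))
    rintro ⟨x, hx⟩
    have hxS : x ∉ S := mem_compl_coe.mp hx
    by_cases hxA : x ∈ A
    · exact Or.inl (hrefl hxS haS (hreachA x hxS hxA))
    · have hxB : x ∈ B := hmemA x hxA
      by_cases hxb : x = b
      · exact Or.inr (hrefl hxS hbS hxb)
      · refine Or.inl ?_
        have h1 : K.Adj ⟨x, mem_compl_coe.mpr hxS⟩ ⟨a, mem_compl_coe.mpr haS⟩ :=
          hKadj hxS haS (hjoin a ha x hxB).symm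
            (by rintro (⟨h, -⟩ | ⟨h, -⟩); exact (hAB a ha) (h ▸ hxB); exact hxb h)
        exact h1.reachable
    
end JW


section L3
variable {V : Type*} [Fintype V] [DecidableEq V]

lemma univ_edge_contra (G : SimpleGraph V) (A B : Finset V)
    (hdisj : Disjoint A B) (hcover : A ∪ B = Finset.univ)
    (hjoin : ∀ a ∈ A, ∀ b ∈ B, G.Adj a b)
    (hmin : G.MinimallyTough)
    (hτk : G.toughness ≤ (A.card : ℝ≥0∞) / (B.card : ℝ≥0∞))
    (hk2 : 2 ≤ B.card)
    {u v : V} (hu : u ∈ A) (hv : v ∈ A) (hadj : G.Adj u v)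
    (huuniv : ∀ w ∈ A, w ≠ u → G.Adj u w) (hvuniv : ∀ w ∈ A, w ≠ v → G.Adj v w) : False := by
  classical
  have hmemA : ∀ w, w ∉ A → w ∈ B := fun w hw => by
    have hu' := Finset.mem_univ w
    rw [← hcover, Finset.mem_union] at hu'
    tauto
  have hAB : ∀ w ∈ A, w ∉ B := fun w hw => Finset.disjoint_left.mp hdisj hw
  have huv_ne : u ≠ v := hadj.ne
  have he : s(u,v) ∈ G.edgeSet := hadj
  obtain ⟨S, hSsep, hlt⟩ := exists_witness (hmin _ he)
  obtain ⟨huS, hvS⟩ := witness_endpoints G S hSsep hlt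
  set K' := (G.deleteEdges {s(u,v)}).induce ((↑S : Set V)ᶜ) with hK'
  set K := G.induce ((↑S : Set V)ᶜ) with hKdef
  have hsep2 : 2 ≤ componentCount K' := hSsep
  set uu : ↥((↑S : Set V)ᶜ) := ⟨u, mem_compl_coe.mpr huS⟩ with huu
  set vv : ↥((↑S : Set V)ᶜ) := ⟨v, mem_compl_coe.mpr hvS⟩ with hvv
  have hK'adj : ∀ {x y : V} (hx : x ∉ S) (hy : y ∉ S), G.Adj x y →
      ¬((x = u ∧ y = v) ∨ (x = v ∧ y = u)) →
      K'.Adj ⟨x, mem_compl_coe.mpr hx⟩ ⟨y, mem_compl_coe.mpr hy⟩ := by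
    intro x y hx hy hadj' hne
    show (G.deleteEdges {s(u,v)}).Adj x y
    rw [SimpleGraph.deleteEdges_adj]
    refine ⟨hadj', fun h => hne ?_⟩
    rw [Set.mem_singleton_iff, Sym2.eq_iff] at h
    exact h
  by_cases hthird : ∃ w, w ∉ S ∧ w ≠ u ∧ w ≠ v
  · obtain ⟨w, hwS, hwu, hwv⟩ := hthird
    have hadjuw : G.Adj u w := by
      by_cases hwA : w ∈ A
      · exact huuniv w hwA hwu
      · exact hjoin u hu w (hmemA w hwA)
    have hadjvw : G.Adj v w := by
      by_cases hwA : w ∈ A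
      · exact hvuniv w hwA hwv
      · exact hjoin v hv w (hmemA w hwA)
    have h1 : K'.Adj uu ⟨w, mem_compl_coe.mpr hwS⟩ :=
      hK'adj huS hwS hadjuw
        (by rintro (⟨-, h⟩ | ⟨h, -⟩); exact hwv h; exact huv_ne h)
    have h2 : K'.Adj ⟨w, mem_compl_coe.mpr hwS⟩ vv :=
      hK'adj hwS hvS hadjvw.symm
        (by rintro (⟨h, -⟩ | ⟨h, -⟩); exact hwu h; exact hwv h)
    have huvreach : K'.Reachable uu vv := h1.reachable.trans h2.reachable
    have hle : K' ≤ K := by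
      intro x y h
      exact h.1
    have hcov : ∀ x y, K.Adj x y → K'.Adj x y ∨ (x = uu ∧ y = vv) ∨ (x = vv ∧ y = uu) := by
      intro x y h
      by_cases hE : s((x : V), (y : V)) = s(u, v)
      · rw [Sym2.eq_iff] at hE
        rcases hE with ⟨h1, h2⟩ | ⟨h1, h2⟩
        · exact Or.inr (Or.inl ⟨Subtype.ext h1, Subtype.ext h2⟩)
        · exact Or.inr (Or.inr ⟨Subtype.ext h1, Subtype.ext h2⟩)
      · left
        show (G.deleteEdges {s(u,v)}).Adj x y
        rw [SimpleGraph.deleteEdges_adj]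
        exact ⟨h, by simpa [Set.mem_singleton_iff] using hE⟩
    have hiff := reach_transfer hle hcov huvreach
    have hcc : componentCount K = componentCount K' := compCount_congr hiff
    have hGsep : G.IsSeparator S := by
      rw [SimpleGraph.IsSeparator]
      rw [← hKdef, hcc]
      exact hsep2
    have hτle := toughness_le' hGsep
    rw [← hKdef, hcc] at hτle
    exact absurd hτle (not_le.mpr hlt)
  · push_neg at hthird
    -- S contains everything except u, v
    have hsub : ((A.erase u).erase v) ∪ B ⊆ S := by
      intro x hx
      rw [Finset.mem_union] at hx
      by_contra hxS
      rcases hx with hx | hx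
      · simp only [Finset.mem_erase] at hx
        exact hx.1 (hthird x hxS hx.2.1)
      · have hxA : x ∉ A := fun h => (hAB x h) hx
        have hxu : x ≠ u := fun h => hxA (h ▸ hu)
        exact hxA ((hthird x hxS hxu) ▸ hv)
    have hcard : (A.card - 2) + B.card ≤ S.card := by
      have h1 : ((A.erase u).erase v).card = A.card - 2 := by
        rw [Finset.card_erase_of_mem
            (show v ∈ A.erase u by rw [Finset.mem_erase]; exact ⟨huv_ne.symm, hv⟩),
          Finset.card_erase_of_mem hu]
        omega
      have h2 : Disjoint ((A.erase u).erase v) B :=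
        Finset.disjoint_of_subset_left (Finset.subset_iff.mpr
          (fun x hx => Finset.mem_of_mem_erase (Finset.mem_of_mem_erase hx))) hdisj
      calc (A.card - 2) + B.card = (((A.erase u).erase v) ∪ B).card := by
            rw [Finset.card_union_of_disjoint h2, h1]
        _ ≤ S.card := Finset.card_le_card hsub
    have hm2 : 2 ≤ A.card := Finset.one_lt_card.mpr ⟨u, hu, v, hv, huv_ne⟩
    -- component count at most 2
    have hcnt : componentCount K' ≤ 2 := by
      have h1 : componentCount K' ≤ Nat.card ↥((↑S : Set V)ᶜ) := compCount_le_card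
      have h2 : ((↑S : Set V)ᶜ) ⊆ {u, v} := by
        intro x hx
        rw [mem_compl_coe] at hx
        by_cases hxu : x = u
        · simp [hxu]
        · simp [hthird x hx hxu]
      have h3 : Nat.card ↥((↑S : Set V)ᶜ) ≤ 2 := by
        rw [Nat.card_coe_set_eq]
        calc ((↑S : Set V)ᶜ).ncard ≤ ({u, v} : Set V).ncard :=
              Set.ncard_le_ncard h2 (Set.toFinite _)
          _ = 2 := Set.ncard_pair huv_ne
      omega
    -- the ratio chain
    have hchain : (((A.card - 2) + B.card : ℕ) : ℝ≥0∞) / ((2 : ℕ) : ℝ≥0∞) ≤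
        (S.card : ℝ≥0∞) / (componentCount K' : ℝ≥0∞) :=
      ENNReal.div_le_div (by exact_mod_cast hcard) (by exact_mod_cast hcnt)
    have hfin : (((A.card - 2) + B.card : ℕ) : ℝ≥0∞) / ((2 : ℕ) : ℝ≥0∞) <
        (A.card : ℝ≥0∞) / (B.card : ℝ≥0∞) :=
      lt_of_le_of_lt hchain (lt_of_lt_of_le hlt hτk)
    have hnat : ((A.card - 2) + B.card) * B.card < A.card * 2 :=
      nat_div_lt_div (by omega) (by omega) hfin
    have hb1 : A.card * 2 ≤ A.card * B.card := Nat.mul_le_mul_left _ hk2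
    have hb2 : A.card * B.card ≤ ((A.card - 2) + B.card) * B.card :=
      Nat.mul_le_mul_right _ (by omega)
    omega

end L3

/-- Let `G` be a minimally tough graph that is the join of two graphs (with vertex sets
`A` and `B`), where the part `A` contains a vertex of maximum degree in `G` and `G[B]`
is disconnected. Then `G` is isomorphic to one of `K_{1,ℓ}`, `K_{2,3}`, `T(2ℓ,ℓ)`, or
`T(2ℓ−1,ℓ)` for some `ℓ ≥ 2`. -/
theorem stmt_13 {V : Type*} [Fintype V] [DecidableEq V] (G : SimpleGraph V) (A B : Finset V)
    (hdisj : Disjoint A B) (hcover : A ∪ B = Finset.univ)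
    (hjoin : ∀ a ∈ A, ∀ b ∈ B, G.Adj a b)
    (hmin : G.MinimallyTough)
    (hmax : ∃ a ∈ A, ∀ w, G.deg w ≤ G.deg a)
    (hdisc : 2 ≤ componentCount (G.induce (B : Set V))) :
    (∃ ℓ, 2 ≤ ℓ ∧ Nonempty (G ≃g completeBipartiteGraph (Fin 1) (Fin ℓ))) ∨
    Nonempty (G ≃g completeBipartiteGraph (Fin 2) (Fin 3)) ∨
    (∃ ℓ, 2 ≤ ℓ ∧ Nonempty (G ≃g SimpleGraph.turanGraph (2 * ℓ) ℓ)) ∨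
    (∃ ℓ, 2 ≤ ℓ ∧ Nonempty (G ≃g SimpleGraph.turanGraph (2 * ℓ - 1) ℓ)) := by
  classical
  obtain ⟨astar, haA, hamax⟩ := hmax
  have hmemA : ∀ v, v ∉ A → v ∈ B := fun v hv => by
    have hu := Finset.mem_univ v
    rw [← hcover, Finset.mem_union] at hu
    tauto
  have hmemB : ∀ v, v ∉ B → v ∈ A := fun v hv => by
    have hu := Finset.mem_univ v
    rw [← hcover, Finset.mem_union] at hu
    tauto
  have hAB : ∀ v ∈ A, v ∉ B := fun v hv => Finset.disjoint_left.mp hdisj hv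
  have hBA : ∀ v ∈ B, v ∉ A := fun v hv h => hAB v h hv
  have hm1 : 1 ≤ A.card := Finset.card_pos.mpr ⟨astar, haA⟩
  have hAc : ((↑A : Finset V) : Set V)ᶜ = ((↑B : Finset V) : Set V) := by
    ext x
    simp only [Set.mem_compl_iff, Finset.mem_coe]
    constructor
    · exact fun h => hmemA x h
    · exact fun h h2 => hAB x h2 h
  have hsepA : G.IsSeparator A := by
    rw [SimpleGraph.IsSeparator, hAc]
    exact hdisc
  have hcA2 : 2 ≤ componentCount (G.induce ((↑A : Set V)ᶜ)) := hsepA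
  have hτA := toughness_le' hsepA
  have hτ2 : G.toughness ≤ (A.card : ℝ≥0∞) / ((2 : ℕ) : ℝ≥0∞) :=
    le_trans hτA (ENNReal.div_le_div_left (by exact_mod_cast hcA2) _)
  have hfinal : ∀ (S : Finset V) (cnt : ℕ), A.card ≤ S.card → cnt ≤ 2 →
      ((S.card : ℝ≥0∞) / (cnt : ℝ≥0∞) < G.toughness) → False := by
    intro S cnt hm' hcnt hlt
    have h1 : (A.card : ℝ≥0∞) / ((2 : ℕ) : ℝ≥0∞) ≤ (S.card : ℝ≥0∞) / (cnt : ℝ≥0∞) :=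
      ENNReal.div_le_div (by exact_mod_cast hm') (by exact_mod_cast hcnt)
    exact absurd hτ2 (not_le.mpr (lt_of_le_of_lt h1 hlt))
  -- degree of a vertex of A
  have hdeg_a : ∀ a ∈ A, G.deg a = B.card + (A.filter (fun x => G.Adj a x)).card := by
    intro a ha
    have hset : G.neighborSet a = ↑(B ∪ A.filter (fun x => G.Adj a x)) := by
      ext w
      simp only [SimpleGraph.mem_neighborSet, Finset.coe_union, Set.mem_union, Finset.mem_coe,
        Finset.mem_filter]
      constructor
      · intro hadj
        by_cases hwA : w ∈ A
        · exact Or.inr ⟨hwA, hadj⟩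
        · exact Or.inl (hmemA w hwA)
      · rintro (hw | ⟨-, hadj⟩)
        · exact hjoin a ha w hw
        · exact hadj
    have hdisj' : Disjoint B (A.filter (fun x => G.Adj a x)) :=
      Finset.disjoint_of_subset_right (Finset.filter_subset _ _) hdisj.symm
    show (G.neighborSet a).ncard = _
    rw [hset, Set.ncard_coe_finset, Finset.card_union_of_disjoint hdisj']
  -- STEP 1 : B is independent
  have hBindep : ∀ b1 ∈ B, ∀ b2 ∈ B, ¬G.Adj b1 b2 := by
    intro b1 hb1 b2 hb2 hadj
    have hb2A : b2 ∉ A := hBA b2 hb2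
    have hdegb : A.card + 1 ≤ G.deg b1 := by
      have hsubn : ((insert b2 A : Finset V) : Set V) ⊆ G.neighborSet b1 := by
        intro w hw
        simp only [Finset.coe_insert, Set.mem_insert_iff, Finset.mem_coe] at hw
        rcases hw with rfl | hw
        · exact hadj
        · exact (hjoin w hw b1 hb1).symm
      have h1 : (insert b2 A).card ≤ (G.neighborSet b1).ncard := by
        rw [← Set.ncard_coe_finset]
        exact Set.ncard_le_ncard hsubn (Set.toFinite _)
      rw [Finset.card_insert_of_notMem hb2A] at h1
      exact h1
    have he : s(astar, b1) ∈ G.edgeSet := hjoin astar haA b1 hb1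
    obtain ⟨S, hSsep, hlt⟩ := exists_witness (hmin _ he)
    rcases join_witness G A B hdisj hcover hjoin haA hb1 S hSsep hlt with
      ⟨hAsub, hNB, hcnt⟩ | ⟨hBsub, hNA, hcnt⟩
    · have hb2S : b2 ∈ S := hNB b2 hb2 hadj
      have hcard : A.card ≤ S.card := by
        have hsub : insert b2 (A.erase astar) ⊆ S := by
          intro x hx
          rw [Finset.mem_insert] at hx
          rcases hx with rfl | hx
          · exact hb2S
          · exact hAsub hx
        have hA' : b2 ∉ A.erase astar := fun h => hb2A (Finset.mem_of_mem_erase h)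
        have h2 := Finset.card_le_card hsub
        rw [Finset.card_insert_of_notMem hA', Finset.card_erase_of_mem haA] at h2
        omega
      exact hfinal S _ hcard hcnt hlt
    · have hstar := hamax b1
      rw [hdeg_a astar haA] at hstar
      have hcard : A.card ≤ S.card := by
        have hsubNA : A.filter (fun x => G.Adj astar x) ⊆ S := by
          intro x hx
          rw [Finset.mem_filter] at hx
          exact hNA x hx.1 hx.2
        have hsub : (B.erase b1) ∪ A.filter (fun x => G.Adj astar x) ⊆ S :=
          Finset.union_subset hBsub hsubNA
        have hdisj' : Disjoint (B.erase b1) (A.filter (fun x => G.Adj astar x)) :=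
          Finset.disjoint_of_subset_left (Finset.erase_subset _ _)
            (Finset.disjoint_of_subset_right (Finset.filter_subset _ _) hdisj.symm)
        have h2 := Finset.card_le_card hsub
        rw [Finset.card_union_of_disjoint hdisj', Finset.card_erase_of_mem hb1] at h2
        have hk1 : 1 ≤ B.card := Finset.card_pos.mpr ⟨b1, hb1⟩
        omega
      exact hfinal S _ hcard hcnt hlt
  -- component count of G - A is exactly |B|
  have hccB : componentCount (G.induce ((↑A : Set V)ᶜ)) = B.card := by
    rw [hAc]
    have hedgeless : ∀ x y : ↥((↑B : Finset V) : Set V), ¬(G.induce ((↑B : Finset V) : Set V)).Adj x y := by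
      rintro ⟨x, hx⟩ ⟨y, hy⟩ hadj
      exact hBindep x hx y hy hadj
    rw [compCount_eq_card_of_edgeless hedgeless, Nat.card_coe_set_eq, Set.ncard_coe_finset]
  have hk2 : 2 ≤ B.card := by
    rw [← hccB]
    exact hcA2
  have hτk : G.toughness ≤ (A.card : ℝ≥0∞) / (B.card : ℝ≥0∞) := by
    rw [← hccB]
    exact hτA
  -- degree of vertices of B
  have hdeg_b : ∀ b ∈ B, G.deg b = A.card := by
    intro b hb
    have hset : G.neighborSet b = ↑A := by
      ext w
      simp only [SimpleGraph.mem_neighborSet, Finset.mem_coe]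
      constructor
      · intro hadj
        by_cases hwA : w ∈ A
        · exact hwA
        · exact absurd hadj (hBindep b hb w (hmemA w hwA))
      · intro hw
        exact (hjoin w hw b hb).symm
    show (G.neighborSet b).ncard = _
    rw [hset, Set.ncard_coe_finset]
  obtain ⟨b0, hb0⟩ := Finset.card_pos.mp (show 0 < B.card by omega)
  have hstar : A.card ≤ B.card + (A.filter (fun x => G.Adj astar x)).card := by
    have h1 := hamax b0
    rw [hdeg_b b0 hb0, hdeg_a astar haA] at h1
    exact h1
  -- STEP 2 : (A.card - 1)/2 < toughness
  have hm1τ : (((A.card - 1) : ℕ) : ℝ≥0∞) / ((2 : ℕ) : ℝ≥0∞) < G.toughness := by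
    have he : s(astar, b0) ∈ G.edgeSet := hjoin astar haA b0 hb0
    obtain ⟨S, hSsep, hlt⟩ := exists_witness (hmin _ he)
    rcases join_witness G A B hdisj hcover hjoin haA hb0 S hSsep hlt with
      ⟨hAsub, -, hcnt⟩ | ⟨hBsub, hNA, hcnt⟩
    · have hcard : A.card - 1 ≤ S.card := by
        have h2 := Finset.card_le_card hAsub
        rw [Finset.card_erase_of_mem haA] at h2
        omega
      exact lt_of_le_of_lt
        (ENNReal.div_le_div (by exact_mod_cast hcard) (by exact_mod_cast hcnt)) hlt
    · have hcard : A.card - 1 ≤ S.card := by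
        have hsubNA : A.filter (fun x => G.Adj astar x) ⊆ S := by
          intro x hx
          rw [Finset.mem_filter] at hx
          exact hNA x hx.1 hx.2
        have hsub : (B.erase b0) ∪ A.filter (fun x => G.Adj astar x) ⊆ S :=
          Finset.union_subset hBsub hsubNA
        have hdisj' : Disjoint (B.erase b0) (A.filter (fun x => G.Adj astar x)) :=
          Finset.disjoint_of_subset_left (Finset.erase_subset _ _)
            (Finset.disjoint_of_subset_right (Finset.filter_subset _ _) hdisj.symm)
        have h2 := Finset.card_le_card hsub
        rw [Finset.card_union_of_disjoint hdisj', Finset.card_erase_of_mem hb0] at h2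
        omega
      exact lt_of_le_of_lt
        (ENNReal.div_le_div (by exact_mod_cast hcard) (by exact_mod_cast hcnt)) hlt
  have hklt : (A.card - 1) * B.card < A.card * 2 :=
    nat_div_lt_div (by omega) (by omega) (lt_of_lt_of_le hm1τ hτk)
  have hcardV : Fintype.card V = A.card + B.card := by
    rw [← Finset.card_univ, ← hcover, Finset.card_union_of_disjoint hdisj]
  -- STEP 3 : case m = 1, the star
  by_cases hm_eq1 : A.card = 1
  · left
    refine ⟨B.card, hk2, ?_⟩
    have hAindep : ∀ x ∈ A, ∀ y ∈ A, ¬G.Adj x y := by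
      intro x hx y hy hadj
      obtain ⟨a0, ha0⟩ := Finset.card_eq_one.mp hm_eq1
      rw [ha0, Finset.mem_singleton] at hx hy
      rw [hx, hy] at hadj
      exact G.loopless.irrefl a0 hadj
    obtain ⟨iso⟩ := iso_completeBipartite G A B hdisj hcover hjoin hAindep hBindep
    rw [← hm_eq1]
    exact ⟨iso⟩
  · -- m ≥ 2
    have hm2 : 2 ≤ A.card := by omega
    -- STEP 4 : property L5 when k = 2
    have hL5 : B.card = 2 → ∀ x ∈ A, ∀ y ∈ A, ∀ z ∈ A, y ≠ x → z ≠ x →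
        ¬G.Adj x y → ¬G.Adj x z → y = z := by
      intro hkk x hxA y hyA z hzA hyx hzx hnxy hnxz
      by_contra hyz
      set S : Finset V := ((Finset.univ.erase x).erase y).erase z with hSdef
      have hmemS : ∀ w, w ∈ S ↔ (w ≠ z ∧ w ≠ y ∧ w ≠ x) := by
        intro w
        simp [hSdef, Finset.mem_erase]
      have hcompl : ((↑S : Finset V) : Set V)ᶜ = {x, y, z} := by
        ext w
        simp only [Set.mem_compl_iff, Finset.mem_coe, hmemS, Set.mem_insert_iff,
          Set.mem_singleton_iff]
        tauto
      have hxS : x ∈ ({x, y, z} : Set V) := by simp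
      have hyS : y ∈ ({x, y, z} : Set V) := by simp
      have hsep : G.IsSeparator S := by
        rw [SimpleGraph.IsSeparator, hcompl]
        apply two_le_compCount_s13 (x := ⟨x, hxS⟩) (y := ⟨y, hyS⟩)
        apply not_reachable_of_isolated
        · intro h
          exact hyx (congrArg Subtype.val h).symm
        · rintro ⟨w, hw⟩ hadj
          have hadj' : G.Adj x w := hadj
          simp only [Set.mem_insert_iff, Set.mem_singleton_iff] at hw
          rcases hw with rfl | rfl | rfl
          · exact G.loopless.irrefl w hadj'
          · exact hnxy hadj'
          · exact hnxz hadj'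
      have hScard : S.card = A.card - 1 := by
        have hyx' : y ∈ Finset.univ.erase x := Finset.mem_erase.mpr ⟨hyx, Finset.mem_univ y⟩
        have hzx' : z ∈ (Finset.univ.erase x).erase y := by
          rw [Finset.mem_erase, Finset.mem_erase]
          exact ⟨fun h => hyz h.symm, hzx, Finset.mem_univ z⟩
        rw [hSdef, Finset.card_erase_of_mem hzx', Finset.card_erase_of_mem hyx',
          Finset.card_erase_of_mem (Finset.mem_univ x), Finset.card_univ, hcardV]
        omega
      have hττ := toughness_le' hsep
      have hcc2 : 2 ≤ componentCount (G.induce ((↑S : Set V)ᶜ)) := hsep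
      have hchain : (S.card : ℝ≥0∞) / (componentCount (G.induce ((↑S : Set V)ᶜ)) : ℝ≥0∞) ≤
          (((A.card - 1) : ℕ) : ℝ≥0∞) / ((2 : ℕ) : ℝ≥0∞) :=
        ENNReal.div_le_div (by exact_mod_cast le_of_eq hScard) (by exact_mod_cast hcc2)
      exact absurd (le_trans hττ hchain) (not_le.mpr hm1τ)
    by_cases hk_eq2 : B.card = 2
    · -- STEP 5 : the Turan case
      have huniq : ∀ x y z : V, y ≠ x → z ≠ x → ¬G.Adj x y → ¬G.Adj x z → y = z := by
        intro x y z hyx hzx hnxy hnxz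
        by_cases hxA : x ∈ A
        · have hyA : y ∈ A := by
            by_contra h
            exact hnxy (hjoin x hxA y (hmemA y h))
          have hzA : z ∈ A := by
            by_contra h
            exact hnxz (hjoin x hxA z (hmemA z h))
          exact hL5 hk_eq2 x hxA y hyA z hzA hyx hzx hnxy hnxz
        · have hxB : x ∈ B := hmemA x hxA
          have hyB : y ∈ B := by
            by_contra h
            exact hnxy ((hjoin y (hmemB y h) x hxB).symm)
          have hzB : z ∈ B := by
            by_contra h
            exact hnxz ((hjoin z (hmemB z h) x hxB).symm)
          have h1 : (B.erase x).card = 1 := by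
            rw [Finset.card_erase_of_mem hxB]
            omega
          obtain ⟨t, ht⟩ := Finset.card_eq_one.mp h1
          have hy' : y ∈ B.erase x := Finset.mem_erase.mpr ⟨hyx, hyB⟩
          have hz' : z ∈ B.erase x := Finset.mem_erase.mpr ⟨hzx, hzB⟩
          rw [ht, Finset.mem_singleton] at hy' hz'
          rw [hy', hz']
      have hq : ∀ u v : V, (∀ y, y ≠ u → G.Adj u y) → (∀ y, y ≠ v → G.Adj v y) → u = v := by
        intro u v huu hvv
        by_contra huv
        have hBtwo : ∀ w, w ∈ B → ∃ w', w' ∈ B ∧ w' ≠ w := by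
          intro w hw
          obtain ⟨w', hw'⟩ := Finset.exists_mem_ne (s := B) (by omega) w
          exact ⟨w', hw'⟩
        have huA : u ∈ A := by
          by_contra h
          obtain ⟨w', hw'B, hw'⟩ := hBtwo u (hmemA u h)
          exact hBindep u (hmemA u h) w' hw'B (huu w' hw')
        have hvA : v ∈ A := by
          by_contra h
          obtain ⟨w', hw'B, hw'⟩ := hBtwo v (hmemA v h)
          exact hBindep v (hmemA v h) w' hw'B (hvv w' hw')
        have hadj : G.Adj u v := (huu v (fun h => huv h.symm)).symm.symm
        exact univ_edge_contra G A B hdisj hcover hjoin hmin hτk hk2 huA hvA hadj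
          (fun w _ hwu => huu w hwu) (fun w _ hwv => hvv w hwv)
      have hn4 : 4 ≤ Fintype.card V := by
        rw [hcardV]
        omega
      rcases iso_turan G huniq hq hn4 with ⟨ℓ, hℓ, hiso⟩ | ⟨ℓ, hℓ, hiso⟩
      · exact Or.inr (Or.inr (Or.inl ⟨ℓ, hℓ, hiso⟩))
      · exact Or.inr (Or.inr (Or.inr ⟨ℓ, hℓ, hiso⟩))
    · -- STEP 6 : K_{2,3}
      have h3k : 3 ≤ B.card := by omega
      have hm2' : A.card = 2 := by
        have hmul : (A.card - 1) * 3 ≤ (A.card - 1) * B.card :=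
          Nat.mul_le_mul_left _ h3k
        omega
      have hk3' : B.card = 3 := by
        rw [hm2'] at hklt
        omega
      have hAindep : ∀ x ∈ A, ∀ y ∈ A, ¬G.Adj x y := by
        intro x hx y hy hadj
        have hxy : x ≠ y := hadj.ne
        have hother : ∀ w, w ∈ A → w ≠ x → w = y := by
          intro w hwA hwx
          have hA2 : (A.erase x).card = 1 := by
            rw [Finset.card_erase_of_mem hx]
            omega
          obtain ⟨t, ht⟩ := Finset.card_eq_one.mp hA2
          have hw' : w ∈ A.erase x := Finset.mem_erase.mpr ⟨hwx, hwA⟩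
          have hy' : y ∈ A.erase x := Finset.mem_erase.mpr ⟨hxy.symm, hy⟩
          rw [ht, Finset.mem_singleton] at hw' hy'
          rw [hw', hy']
        have hother2 : ∀ w, w ∈ A → w ≠ y → w = x := by
          intro w hwA hwy
          by_cases hwx : w = x
          · exact hwx
          · exact absurd (hother w hwA hwx) hwy
        refine univ_edge_contra G A B hdisj hcover hjoin hmin hτk hk2 hx hy hadj ?_ ?_
        · intro w hwA hwx
          rw [hother w hwA hwx]
          exact hadj
        · intro w hwA hwy
          rw [hother2 w hwA hwy]
          exact hadj.symm
      right
      left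
      obtain ⟨iso⟩ := iso_completeBipartite G A B hdisj hcover hjoin hAindep hBindep
      rw [← hm2', ← hk3']
      exact ⟨iso⟩
end

section
/- Let G be a graph with toughness t having a universal vertex v, and let t' be the toughness of G' = G − v. Then G is minimally tough if and only if G' is ⌈2t'⌉-regular and ⌈2t⌉ = ⌈2t'⌉ + 1. -/
open SimpleGraph
open scoped ENNReal NNReal

lemma isolated_not_reachable {W : Type*} {K : SimpleGraph W} {x y : W}
    (h : ∀ u, ¬ K.Adj x u) (hxy : x ≠ y) : ¬ K.Reachable x y := by
  rintro ⟨p⟩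
  cases p with
  | nil => exact hxy rfl
  | cons h' _ => exact h _ h'

-- L2

lemma two_le_componentCount {W : Type*} [Finite W] {K : SimpleGraph W} {x y : W}
    (hr : ¬ K.Reachable x y) : 2 ≤ componentCount K := by
  have : K.connectedComponentMk x ≠ K.connectedComponentMk y := by
    simpa [ConnectedComponent.eq] using hr
  have hnt : Nontrivial K.ConnectedComponent := ⟨_, _, this⟩
  haveI : Fintype K.ConnectedComponent := Fintype.ofFinite _
  rw [componentCount, Nat.card_eq_fintype_card]
  exact Fintype.one_lt_card_iff_nontrivial.2 hnt

-- L3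

lemma componentCount_le_two {W : Type*} {K : SimpleGraph W} {x y : W}
    (h : ∀ c : K.ConnectedComponent, c = K.connectedComponentMk x ∨ c = K.connectedComponentMk y) :
    componentCount K ≤ 2 := by
  have hs : Function.Surjective (fun i : Fin 2 =>
      if i = 0 then K.connectedComponentMk x else K.connectedComponentMk y) := by
    intro c
    rcases h c with h1 | h1
    · exact ⟨0, h1.symm⟩
    · exact ⟨1, by simpa using h1.symm⟩
  simpa [componentCount] using Nat.card_le_card_of_surjective _ hs

lemma componentCount_le_one {W : Type*} {K : SimpleGraph W} {x : W}
    (h : ∀ c : K.ConnectedComponent, c = K.connectedComponentMk x) :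
    componentCount K ≤ 1 := by
  have hs : Function.Surjective (fun _ : Fin 1 => K.connectedComponentMk x) := by
    intro c; exact ⟨0, (h c).symm⟩
  simpa [componentCount] using Nat.card_le_card_of_surjective _ hs

-- L4

lemma toughness_le_sep {W : Type*} {K : SimpleGraph W} {S : Finset W} (h : K.IsSeparator S) :
    K.toughness ≤ (S.card : ℝ≥0∞) / (componentCount (K.induce ((↑S : Set W)ᶜ)) : ℝ≥0∞) :=
  iInf₂_le S h

-- L6 iso invariance

lemma componentCount_eq_of_iso {W W' : Type*} {K : SimpleGraph W} {K' : SimpleGraph W'}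
    (φ : K ≃g K') : componentCount K = componentCount K' :=
  Nat.card_congr φ.connectedComponentEquiv

lemma exists_min_sep {W : Type*} [Finite W] (K : SimpleGraph W) (h : K.toughness ≠ ⊤) :
    ∃ S : Finset W, K.IsSeparator S ∧
      K.toughness = (S.card : ℝ≥0∞) / (componentCount (K.induce ((↑S : Set W)ᶜ)) : ℝ≥0∞) := by
  classical
  haveI := Fintype.ofFinite W
  set f : Finset W → ℝ≥0∞ := fun S =>
    (S.card : ℝ≥0∞) / (componentCount (K.induce ((↑S : Set W)ᶜ)) : ℝ≥0∞) with hf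
  have hne : {S : Finset W | K.IsSeparator S}.Nonempty := by
    by_contra hemp
    rw [Set.not_nonempty_iff_eq_empty] at hemp
    apply h
    rw [SimpleGraph.toughness]
    have hno : ∀ S : Finset W, ¬ K.IsSeparator S := by
      intro S hS
      have : S ∈ {S : Finset W | K.IsSeparator S} := hS
      rw [hemp] at this
      exact this
    simp [iInf_neg, hno]
  have himg : K.toughness = sInf (f '' {S : Finset W | K.IsSeparator S}) := by
    rw [sInf_image]
    rfl
  have hfin : (f '' {S : Finset W | K.IsSeparator S}).Finite :=
    (Set.toFinite _).image f
  have hmem : sInf (f '' {S | K.IsSeparator S}) ∈ f '' {S | K.IsSeparator S} :=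
    Set.Nonempty.csInf_mem (hne.image f) hfin
  rw [← himg] at hmem
  obtain ⟨S, hS, hSe⟩ := hmem
  exact ⟨S, hS, hSe.symm⟩

lemma sep_transfer {V : Type*} (G : SimpleGraph V) (v : V) (S' : Finset ↥({v}ᶜ : Set V)) :
    ∃ T : Finset V, v ∈ T ∧ T.card = S'.card + 1 ∧
      Nonempty ((G.induce ((↑T : Set V)ᶜ)) ≃g
        ((G.induce ({v}ᶜ : Set V)).induce ((↑S' : Set ↥({v}ᶜ : Set V))ᶜ))) := by
  classical
  refine ⟨insert v (S'.map ⟨Subtype.val, Subtype.val_injective⟩), Finset.mem_insert_self _ _, ?_, ?_⟩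
  · rw [Finset.card_insert_of_notMem, Finset.card_map]
    simp only [Finset.mem_map, Function.Embedding.coeFn_mk, not_exists]
    rintro ⟨x, hx⟩ ⟨_, h⟩
    exact hx h
  · set T : Finset V := insert v (S'.map ⟨Subtype.val, Subtype.val_injective⟩) with hT
    have hmem : ∀ x : V, x ∈ (↑T : Set V)ᶜ ↔ ∃ hx : x ∈ ({v}ᶜ : Set V),
        (⟨x, hx⟩ : ↥({v}ᶜ : Set V)) ∈ ((↑S' : Set ↥({v}ᶜ : Set V))ᶜ) := by
      intro x
      simp only [hT, Set.mem_compl_iff, Finset.coe_insert, Set.mem_insert_iff, Finset.mem_coe,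
        Finset.mem_map, Function.Embedding.coeFn_mk, not_or, not_exists, Set.mem_singleton_iff]
      constructor
      · rintro ⟨hxv, hxS⟩
        exact ⟨hxv, fun hmem => hxS _ ⟨hmem, rfl⟩⟩
      · rintro ⟨hxv, hxS⟩
        refine ⟨hxv, fun a ha => ?_⟩
        obtain ⟨haS, hax⟩ := ha
        exact hxS (by rwa [show (⟨x, hxv⟩ : ↥({v}ᶜ : Set V)) = a from Subtype.ext hax.symm])
    refine ⟨⟨⟨fun x => ⟨⟨(x : V), ((hmem x).1 x.2).1⟩, ((hmem x).1 x.2).2⟩,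
      fun y => ⟨((y : ↥({v}ᶜ : Set V)) : V), (hmem _).2 ⟨(y : ↥({v}ᶜ : Set V)).2, by
        simpa using y.2⟩⟩, ?_, ?_⟩, ?_⟩⟩
    · intro x; rfl
    · intro y; rfl
    · intro a b; rfl

lemma toughness_lt_exists {W : Type*} {K : SimpleGraph W} {a : ℝ≥0∞}
    (h : K.toughness < a) : ∃ S : Finset W, K.IsSeparator S ∧
      (S.card : ℝ≥0∞) / (componentCount (K.induce ((↑S : Set W)ᶜ)) : ℝ≥0∞) < a := by
  rw [SimpleGraph.toughness, iInf_lt_iff] at h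
  obtain ⟨S, hS⟩ := h
  rw [iInf_lt_iff] at hS
  obtain ⟨hsep, hval⟩ := hS
  exact ⟨S, hsep, hval⟩

lemma stepA {V : Type*} [Fintype V] (G : SimpleGraph V) (v : V) (hv : G.IsUniversalVtx v)
    (t : ℝ≥0) (ht : G.toughness = (t : ℝ≥0∞)) (w : V) (hw' : w ∈ ({v}ᶜ : Set V))
    (hlt : (G.deleteEdges {s(v, w)}).toughness < G.toughness) :
    (((G.induce ({v}ᶜ : Set V)).deg ⟨w, hw'⟩ : ℝ≥0∞)) < 2 * (t : ℝ≥0∞) := by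
  classical
  have hw : w ≠ v := by simpa using hw'
  rw [ht] at hlt
  obtain ⟨S, hSsep, hSval⟩ := toughness_lt_exists hlt
  set e : Sym2 V := s(v, w) with he
  set Kd := G.deleteEdges {e} with hKd
  by_cases hvS : v ∈ S
  · exfalso
    have heq : Kd.induce ((↑S : Set V)ᶜ) = G.induce ((↑S : Set V)ᶜ) := by
      ext a b
      show Kd.Adj ↑a ↑b ↔ G.Adj ↑a ↑b
      rw [hKd, deleteEdges_adj]
      simp only [Set.mem_singleton_iff, and_iff_left_iff_imp]
      intro _ habe
      rw [he, Sym2.eq_iff] at habe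
      rcases habe with ⟨h1, _⟩ | ⟨_, h2⟩
      · exact a.2 (by simp [h1, hvS])
      · exact b.2 (by simp [h2, hvS])
    have hGsep : G.IsSeparator S := by
      rw [SimpleGraph.IsSeparator, ← heq]; exact hSsep
    rw [heq] at hSval
    have := toughness_le_sep (K := G) hGsep
    rw [ht] at this
    exact absurd (lt_of_le_of_lt this hSval) (lt_irrefl _)
  · -- v ∉ S
    have hvs : v ∈ ((↑S : Set V)ᶜ) := by simpa using hvS
    set K := Kd.induce ((↑S : Set V)ᶜ) with hK
    set v' : ((↑S : Set V)ᶜ : Set V) := ⟨v, hvs⟩ with hv'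
    have hadj : ∀ u : ((↑S : Set V)ᶜ : Set V), (u : V) ≠ v → (u : V) ≠ w → K.Adj u v' := by
      intro u h1 h2
      show Kd.Adj ↑u v
      rw [hKd, deleteEdges_adj]
      refine ⟨(hv u h1).symm, ?_⟩
      simp only [Set.mem_singleton_iff, he, Sym2.eq_iff]
      push_neg
      exact ⟨fun h => absurd h h1, fun h => absurd h h2⟩
    have hcomp : ∀ z : ((↑S : Set V)ᶜ : Set V), (z : V) ≠ w →
        K.connectedComponentMk z = K.connectedComponentMk v' := by
      intro z hz
      by_cases hzv : (z : V) = v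
      · rw [show z = v' from Subtype.ext hzv]
      · exact ConnectedComponent.sound (hadj z hzv hz).reachable
    by_cases hwS : w ∈ S
    · exfalso
      have hle1 : componentCount K ≤ 1 := by
        apply componentCount_le_one (x := v')
        intro c
        obtain ⟨z, hzmk⟩ := c.exists_rep
        have hzw : (z : V) ≠ w := by
          intro hzw
          exact z.2 (by simp [hzw, hwS])
        rw [← hzmk]
        exact hcomp z hzw
      have h2 : 2 ≤ componentCount K := hSsep
      omega
    · have hws : w ∈ ((↑S : Set V)ᶜ) := by simpa using hwS
      set w' : ((↑S : Set V)ᶜ : Set V) := ⟨w, hws⟩ with hw'd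
      have hall : ∀ c : K.ConnectedComponent,
          c = K.connectedComponentMk v' ∨ c = K.connectedComponentMk w' := by
        intro c
        obtain ⟨z, hzmk⟩ := c.exists_rep
        by_cases hzw : (z : V) = w
        · right; rw [← hzmk, show z = w' from Subtype.ext hzw]; rfl
        · left; rw [← hzmk]; exact hcomp z hzw
      have hcle2 : componentCount K ≤ 2 := componentCount_le_two hall
      -- neighbors of w (other than v) are in S
      have hnb : ∀ u : V, G.Adj w u → u ≠ v → u ∈ S := by
        intro u hu huv
        by_contra huS
        have hus : u ∈ ((↑S : Set V)ᶜ) := by simpa using huS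
        have h1 : K.Adj w' ⟨u, hus⟩ := by
          show Kd.Adj w u
          rw [hKd, deleteEdges_adj]
          refine ⟨hu, ?_⟩
          simp only [Set.mem_singleton_iff, he, Sym2.eq_iff]
          push_neg
          exact ⟨fun h => absurd h hw, fun _ => fun h => absurd h huv⟩
        have h2 : K.connectedComponentMk ⟨u, hus⟩ = K.connectedComponentMk v' :=
          hcomp _ (by simpa using hu.ne')
        have h3 : K.connectedComponentMk w' = K.connectedComponentMk v' :=
          (ConnectedComponent.sound h1.reachable).trans h2
        have hle1 : componentCount K ≤ 1 := by
          apply componentCount_le_one (x := v')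
          intro c
          rcases hall c with h | h
          · exact h
          · rw [h, h3]
        have := hSsep
        have h2' : 2 ≤ componentCount K := this
        omega
      -- degree bound
      have hdeg : (G.induce ({v}ᶜ : Set V)).deg ⟨w, hw'⟩ ≤ S.card := by
        rw [SimpleGraph.deg]
        have himg : Subtype.val '' ((G.induce ({v}ᶜ : Set V)).neighborSet ⟨w, hw'⟩)
            ⊆ (↑S : Set V) := by
          rintro _ ⟨u, hu, rfl⟩
          have huv : (u : V) ≠ v := by
            intro h
            exact (Set.mem_compl_iff _ _).1 u.2 (by simp [h])
          exact hnb ↑u (hu : G.Adj w ↑u) huv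
        calc ((G.induce ({v}ᶜ : Set V)).neighborSet ⟨w, hw'⟩).ncard
            = (Subtype.val '' ((G.induce ({v}ᶜ : Set V)).neighborSet ⟨w, hw'⟩)).ncard :=
              (Set.ncard_image_of_injective _ Subtype.val_injective).symm
          _ ≤ (↑S : Set V).ncard := Set.ncard_le_ncard himg (S.finite_toSet)
          _ = S.card := Set.ncard_coe_finset S
      -- numeric conclusion
      have hc2 : (componentCount K : ℝ≥0∞) ≤ 2 := by exact_mod_cast hcle2
      have hchain : ((G.induce ({v}ᶜ : Set V)).deg ⟨w, hw'⟩ : ℝ≥0∞) / 2 < (t : ℝ≥0∞) := by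
        calc ((G.induce ({v}ᶜ : Set V)).deg ⟨w, hw'⟩ : ℝ≥0∞) / 2
            ≤ (S.card : ℝ≥0∞) / 2 := ENNReal.div_le_div (by exact_mod_cast hdeg) le_rfl
          _ ≤ (S.card : ℝ≥0∞) / (componentCount K : ℝ≥0∞) :=
              ENNReal.div_le_div_left hc2 _
          _ < (t : ℝ≥0∞) := hSval
      have := (ENNReal.div_lt_iff (Or.inl (by norm_num)) (Or.inl (by norm_num))).1 hchain
      calc ((G.induce ({v}ᶜ : Set V)).deg ⟨w, hw'⟩ : ℝ≥0∞) < (t : ℝ≥0∞) * 2 := this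
        _ = 2 * (t : ℝ≥0∞) := mul_comm _ _

lemma toughness_le_half {W : Type*} {K : SimpleGraph W} {S : Finset W} {d : ℕ}
    (hsep : K.IsSeparator S) (hcard : S.card ≤ d) : K.toughness ≤ (d : ℝ≥0∞) / 2 := by
  refine le_trans (toughness_le_sep hsep) ?_
  have hc : (2 : ℝ≥0∞) ≤ (componentCount (K.induce ((↑S : Set W)ᶜ)) : ℝ≥0∞) := by
    exact_mod_cast hsep
  calc (S.card : ℝ≥0∞) / (componentCount (K.induce ((↑S : Set W)ᶜ)) : ℝ≥0∞)
      ≤ (d : ℝ≥0∞) / 2 := ENNReal.div_le_div (by exact_mod_cast hcard) hc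

lemma stepB {W : Type*} [Finite W] (K : SimpleGraph W) (t' : ℝ≥0)
    (ht' : K.toughness = (t' : ℝ≥0∞)) (w : W) : 2 * (t' : ℝ≥0∞) ≤ (K.deg w : ℝ≥0∞) := by
  classical
  haveI := Fintype.ofFinite W
  suffices h : K.toughness ≤ (K.deg w : ℝ≥0∞) / 2 by
    rw [ht'] at h
    have := (ENNReal.le_div_iff_mul_le (Or.inl (by norm_num)) (Or.inl (by norm_num))).1 h
    calc 2 * (t' : ℝ≥0∞) = (t' : ℝ≥0∞) * 2 := mul_comm _ _
      _ ≤ _ := this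
  by_cases hcase : ∃ u, u ≠ w ∧ ¬ K.Adj w u
  · obtain ⟨u, huw, hadj⟩ := hcase
    have hfin : (K.neighborSet w).Finite := Set.toFinite _
    set S : Finset W := hfin.toFinset with hS
    have hwS : w ∉ S := by simp [hS, hfin.mem_toFinset]
    have huS : u ∉ S := by simp [hS, hfin.mem_toFinset]; exact fun h => hadj h
    have hws : w ∈ ((↑S : Set W)ᶜ) := by simpa using hwS
    have hus : u ∈ ((↑S : Set W)ᶜ) := by simpa using huS
    have hiso : ∀ z, ¬ (K.induce ((↑S : Set W)ᶜ)).Adj ⟨w, hws⟩ z := by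
      intro z hz
      have h1 : K.Adj w ↑z := hz
      have : (z : W) ∈ S := by simp [hS, hfin.mem_toFinset]; exact h1
      exact (Set.mem_compl_iff _ _).1 z.2 (by simpa using this)
    have hsep : K.IsSeparator S := by
      apply two_le_componentCount (x := ⟨w, hws⟩) (y := ⟨u, hus⟩)
      exact isolated_not_reachable hiso (by simp [Subtype.ext_iff]; exact fun h => huw h.symm)
    have hcard : S.card ≤ K.deg w := by
      rw [SimpleGraph.deg, Set.ncard_eq_toFinset_card _ hfin]
    exact toughness_le_half hsep hcard
  · push_neg at hcase
    obtain ⟨S₀, hsep, hval⟩ := exists_min_sep K (by rw [ht']; exact ENNReal.coe_ne_top)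
    -- two vertices outside S₀
    have hnt : 2 ≤ ((↑S₀ : Set W)ᶜ).ncard := by
      have h2 : 2 ≤ componentCount (K.induce ((↑S₀ : Set W)ᶜ)) := hsep
      rw [componentCount] at h2
      haveI : Fintype ((K.induce ((↑S₀ : Set W)ᶜ)).ConnectedComponent) := Fintype.ofFinite _
      rw [Nat.card_eq_fintype_card] at h2
      have hnt' : Nontrivial ((K.induce ((↑S₀ : Set W)ᶜ)).ConnectedComponent) :=
        Fintype.one_lt_card_iff_nontrivial.1 h2
      obtain ⟨c1, c2, hc⟩ := hnt'
      obtain ⟨z1, hz1⟩ := c1.exists_rep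
      obtain ⟨z2, hz2⟩ := c2.exists_rep
      have hz : z1 ≠ z2 := by rintro rfl; rw [← hz1, ← hz2] at hc; exact hc rfl
      have := (Set.one_lt_ncard_iff (s := ((↑S₀ : Set W)ᶜ)) (Set.toFinite _)).2
        ⟨↑z1, ↑z2, z1.2, z2.2, fun h => hz (Subtype.ext h)⟩
      omega
    have hsum : (↑S₀ : Set W).ncard + ((↑S₀ : Set W)ᶜ).ncard = Nat.card W :=
      Set.ncard_add_ncard_compl _ (Set.toFinite _) (Set.toFinite _)
    rw [Set.ncard_coe_finset] at hsum
    -- w is universal in K: deg w = Nat.card W - 1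
    have hdeg : K.deg w + 1 = Nat.card W := by
      have hns : K.neighborSet w = {w}ᶜ := by
        ext u
        simp only [mem_neighborSet, Set.mem_compl_iff, Set.mem_singleton_iff]
        exact ⟨fun h => h.ne', fun h => hcase u h⟩
      have : ({w} : Set W).ncard + ({w} : Set W)ᶜ.ncard = Nat.card W :=
        Set.ncard_add_ncard_compl _ (Set.toFinite _) (Set.toFinite _)
      rw [Set.ncard_singleton] at this
      rw [SimpleGraph.deg, hns]
      omega
    have hcard : S₀.card ≤ K.deg w := by omega
    exact toughness_le_half hsep hcard

lemma stepC {V : Type*} [Fintype V] (G : SimpleGraph V) (v : V) (t t' : ℝ≥0)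
    (ht : G.toughness = (t : ℝ≥0∞))
    (ht' : (G.induce ({v}ᶜ : Set V)).toughness = (t' : ℝ≥0∞)) :
    (t : ℝ≥0∞) ≤ (t' : ℝ≥0∞) + 1 / 2 ∧ Nonempty ↥({v}ᶜ : Set V) := by
  classical
  set H := G.induce ({v}ᶜ : Set V) with hH
  obtain ⟨S₀, hsep, hval⟩ := exists_min_sep H (by rw [ht']; exact ENNReal.coe_ne_top)
  obtain ⟨T, hvT, hTcard, ⟨φ⟩⟩ := sep_transfer G v S₀
  have hcc : componentCount (G.induce ((↑T : Set V)ᶜ))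
      = componentCount (H.induce ((↑S₀ : Set ↥({v}ᶜ : Set V))ᶜ)) := componentCount_eq_of_iso φ
  have hTsep : G.IsSeparator T := by
    rw [SimpleGraph.IsSeparator, hcc]; exact hsep
  have hc2 : (2 : ℝ≥0∞) ≤ (componentCount (H.induce ((↑S₀ : Set ↥({v}ᶜ : Set V))ᶜ)) : ℝ≥0∞) := by
    exact_mod_cast hsep
  have hne : Nonempty ↥({v}ᶜ : Set V) := by
    have h2 : 2 ≤ componentCount (H.induce ((↑S₀ : Set ↥({v}ᶜ : Set V))ᶜ)) := hsep
    rw [componentCount] at h2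
    have hpos : 0 < Nat.card ((H.induce ((↑S₀ : Set ↥({v}ᶜ : Set V))ᶜ)).ConnectedComponent) := by
      omega
    have := Nat.card_pos_iff.1 hpos
    obtain ⟨c⟩ := this.1
    obtain ⟨z, _⟩ := c.exists_rep
    exact ⟨↑z⟩
  refine ⟨?_, hne⟩
  have h1 := toughness_le_sep hTsep
  rw [ht, hTcard] at h1
  have h2 : ((S₀.card + 1 : ℕ) : ℝ≥0∞) / (componentCount (G.induce ((↑T : Set V)ᶜ)) : ℝ≥0∞)
      = (S₀.card : ℝ≥0∞) / (componentCount (H.induce ((↑S₀ : Set ↥({v}ᶜ : Set V))ᶜ)) : ℝ≥0∞)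
        + 1 / (componentCount (H.induce ((↑S₀ : Set ↥({v}ᶜ : Set V))ᶜ)) : ℝ≥0∞) := by
    rw [hcc]
    push_cast
    rw [ENNReal.add_div]
  rw [h2, ← hval, ht'] at h1
  refine le_trans h1 (add_le_add le_rfl ?_)
  exact ENNReal.div_le_div_left hc2 1

-- degree relation

lemma deg_succ {V : Type*} [Fintype V] (G : SimpleGraph V) (v : V) (hv : G.IsUniversalVtx v)
    (a : V) (ha : a ∈ ({v}ᶜ : Set V)) :
    G.deg a = (G.induce ({v}ᶜ : Set V)).deg ⟨a, ha⟩ + 1 := by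
  classical
  have hav : a ≠ v := by simpa using ha
  have himg : Subtype.val '' ((G.induce ({v}ᶜ : Set V)).neighborSet ⟨a, ha⟩)
      = G.neighborSet a \ {v} := by
    ext u
    simp only [Set.mem_image, mem_neighborSet, Set.mem_diff, Set.mem_singleton_iff]
    constructor
    · rintro ⟨u', hu', rfl⟩
      refine ⟨hu', ?_⟩
      intro h
      exact (Set.mem_compl_iff _ _).1 u'.2 (by simp [h])
    · rintro ⟨hu, huv⟩
      exact ⟨⟨u, by simpa using huv⟩, hu, rfl⟩
  have hvmem : v ∈ G.neighborSet a := (hv a hav).symm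
  have hins : G.neighborSet a = insert v (G.neighborSet a \ {v}) := by
    rw [Set.insert_diff_singleton, Set.insert_eq_self.2 hvmem]
  have hcard : (G.neighborSet a).ncard = (G.neighborSet a \ {v}).ncard + 1 := by
    nth_rewrite 1 [hins]
    rw [Set.ncard_insert_of_notMem (by simp) (Set.toFinite _)]
  rw [SimpleGraph.deg, SimpleGraph.deg, hcard, ← himg,
    Set.ncard_image_of_injective _ Subtype.val_injective]

-- the backward direction core

lemma stepD {V : Type*} [Fintype V] (G : SimpleGraph V) (v : V) (hv : G.IsUniversalVtx v)
    (t : ℝ≥0) (ht : G.toughness = (t : ℝ≥0∞)) (d : ℕ)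
    (hreg : (G.induce ({v}ᶜ : Set V)).RegularOfDegree d) (hd : (d : ℝ≥0∞) < 2 * (t : ℝ≥0∞)) :
    G.MinimallyTough := by
  classical
  have key : ∀ a b : V, G.Adj a b → a ≠ v →
      (G.deleteEdges {s(a, b)}).toughness < G.toughness := by
    intro a b hab hav
    have hbN : b ∈ G.neighborSet a := hab
    set Kd := G.deleteEdges {s(a, b)} with hKd
    set S : Finset V := (Set.toFinite (G.neighborSet a \ {b})).toFinset with hS
    have hmem : ∀ x, x ∈ S ↔ (G.Adj a x ∧ x ≠ b) := by
      intro x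
      rw [hS, Set.Finite.mem_toFinset, Set.mem_diff]
      simp [mem_neighborSet]
    have haS : a ∉ S := fun h => (G.irrefl ((hmem a).1 h).1)
    have hbS : b ∉ S := fun h => ((hmem b).1 h).2 rfl
    have has : a ∈ ((↑S : Set V)ᶜ) := by simpa using haS
    have hbs : b ∈ ((↑S : Set V)ᶜ) := by simpa using hbS
    have hiso : ∀ z, ¬ (Kd.induce ((↑S : Set V)ᶜ)).Adj ⟨a, has⟩ z := by
      intro z hz
      have h1 : Kd.Adj a ↑z := hz
      rw [hKd, deleteEdges_adj] at h1
      obtain ⟨hadj, hne⟩ := h1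
      have hzb : (z : V) ≠ b := by
        intro h
        exact hne (by rw [h]; rfl)
      have : (z : V) ∈ S := (hmem _).2 ⟨hadj, hzb⟩
      exact (Set.mem_compl_iff _ _).1 z.2 (by simpa using this)
    have hsep : Kd.IsSeparator S := by
      apply two_le_componentCount (x := ⟨a, has⟩) (y := ⟨b, hbs⟩)
      exact isolated_not_reachable hiso
        (by simp [Subtype.ext_iff]; exact hab.ne)
    have hcard : S.card ≤ d := by
      have h1 : (G.neighborSet a \ {b}).ncard + 1 = (G.neighborSet a).ncard := by
        have hins : G.neighborSet a = insert b (G.neighborSet a \ {b}) := by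
          rw [Set.insert_diff_singleton, Set.insert_eq_self.2 hbN]
        nth_rewrite 2 [hins]
        rw [Set.ncard_insert_of_notMem (by simp) (Set.toFinite _)]
      have h2 : G.deg a = d + 1 := by
        rw [deg_succ G v hv a (by simpa using hav), hreg]
      rw [SimpleGraph.deg] at h2
      have h3 : S.card = (G.neighborSet a \ {b}).ncard := by
        rw [hS, ← Set.ncard_eq_toFinset_card _ (Set.toFinite _)]
      omega
    have hval := toughness_le_half hsep hcard
    rw [ht]
    refine lt_of_le_of_lt hval ?_
    rw [ENNReal.div_lt_iff (Or.inl (by norm_num)) (Or.inl (by norm_num))]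
    rw [mul_comm]
    exact hd
  intro e he
  induction e with
  | _ x y =>
    rw [mem_edgeSet] at he
    by_cases hxv : x = v
    · have hyv : y ≠ v := by rw [hxv] at he; exact fun h => G.irrefl (h ▸ he)
      rw [Sym2.eq_swap]
      exact key y x he.symm hyv
    · exact key x y he hxv

/-- Let `G` be a graph with toughness `t` having a universal vertex `v`, and let `t'`
be the toughness of `G' = G − v`. Then `G` is minimally tough if and only if `G'` is
`⌈2t'⌉`-regular and `⌈2t⌉ = ⌈2t'⌉ + 1`. -/
theorem stmt_14 {V : Type*} [Fintype V] (G : SimpleGraph V) (v : V)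
    (hv : G.IsUniversalVtx v) (t t' : ℝ≥0)
    (ht : G.toughness = (t : ℝ≥0∞))
    (ht' : (G.induce ({v}ᶜ : Set V)).toughness = (t' : ℝ≥0∞)) :
    G.MinimallyTough ↔
      (G.induce ({v}ᶜ : Set V)).RegularOfDegree ⌈2 * t'⌉₊ ∧ ⌈2 * t⌉₊ = ⌈2 * t'⌉₊ + 1 := by
  classical
  constructor
  · intro hMT
    obtain ⟨hC, hne⟩ := stepC G v t t' ht ht'
    have hA' : ∀ w' : ↥({v}ᶜ : Set V), (G.induce ({v}ᶜ : Set V)).deg w' < ⌈2 * t⌉₊ := by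
      intro w'
      have hw'v : (w' : V) ≠ v := fun h => (Set.mem_compl_iff _ _).1 w'.2 (by simp [h])
      have hedge : s(v, (w' : V)) ∈ G.edgeSet := by rw [mem_edgeSet]; exact hv _ hw'v
      have h1 := stepA G v hv t ht ↑w' w'.2 (hMT _ hedge)
      have h2 : ((G.induce ({v}ᶜ : Set V)).deg w' : ℝ≥0) < 2 * t := by exact_mod_cast h1
      rw [Nat.lt_ceil]
      exact h2
    have hB' : ∀ w' : ↥({v}ᶜ : Set V), ⌈2 * t'⌉₊ ≤ (G.induce ({v}ᶜ : Set V)).deg w' := by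
      intro w'
      have h1 := stepB (G.induce ({v}ᶜ : Set V)) t' ht' w'
      have h2 : 2 * t' ≤ ((G.induce ({v}ᶜ : Set V)).deg w' : ℝ≥0) := by exact_mod_cast h1
      rw [Nat.ceil_le]
      exact_mod_cast h2
    have hC' : ⌈2 * t⌉₊ ≤ ⌈2 * t'⌉₊ + 1 := by
      have h1 : (t : ℝ≥0) ≤ t' + 1 / 2 := by
        rw [show ((1 : ℝ≥0∞) / 2) = (((1 / 2 : ℝ≥0)) : ℝ≥0∞) by
            rw [ENNReal.coe_div (by norm_num)]; norm_num,
          ← ENNReal.coe_add, ENNReal.coe_le_coe] at hC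
        exact hC
      have h2 : 2 * t ≤ 2 * t' + 1 := by
        calc 2 * t ≤ 2 * (t' + 1 / 2) := mul_le_mul_right h1 2
          _ = 2 * t' + 1 := by rw [mul_add]; norm_num
      calc ⌈2 * t⌉₊ ≤ ⌈2 * t' + 1⌉₊ := Nat.ceil_le_ceil h2
        _ = ⌈2 * t'⌉₊ + 1 := Nat.ceil_add_one zero_le
    obtain ⟨w₀⟩ := hne
    refine ⟨fun w' => ?_, ?_⟩
    · have h1 := hA' w'; have h2 := hB' w'; omega
    · have h1 := hA' w₀; have h2 := hB' w₀; omega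
  · rintro ⟨hreg, hceil⟩
    apply stepD G v hv t ht ⌈2 * t'⌉₊ hreg
    have h1 : ⌈2 * t'⌉₊ < ⌈2 * t⌉₊ := by omega
    have h2 : ((⌈2 * t'⌉₊ : ℕ) : ℝ≥0) < 2 * t := Nat.lt_ceil.1 h1
    exact_mod_cast h2
end
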